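/- arXiv:1708.06168 — 9 statements merged into one kernel-verified Lean document; each statement's English description precedes it below -/
import Mathlib

section
/- Let p, P be continuous on an open interval (a,b) (possibly infinite) with P(x) ≥ p(x) on (a,b) and P ≢ p. Suppose u is a solution of u'' + p u = 0 that is positive on (a,b) and satisfies ∫_a^{x₀} dx/u² = ∞ and ∫_{x₀}^b dx/u² = ∞ for some interior point x₀. Then every solution v of v'' + P v = 0 has a zero in (a,b). -/
open MeasureTheory Set

lemma cofinal_seq (S : Set ℝ) (hS : S.Nonempty) :
    ∃ y : ℕ → ℝ, Monotone y ∧ (∀ n, y n ∈ S) ∧ ∀ z ∈ S, ∃ n, z ≤ y n := by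
  by_cases h : BddAbove S
  · by_cases hs : sSup S ∈ S
    · exact ⟨fun _ => sSup S, monotone_const, fun _ => hs, fun z hz => ⟨0, le_csSup h hz⟩⟩
    · obtain ⟨y, hmono, htend, hmem⟩ := exists_seq_tendsto_sSup hS h
      refine ⟨y, hmono, hmem, fun z hz => ?_⟩
      have hzlt : z < sSup S := lt_of_le_of_ne (le_csSup h hz) (fun he => hs (he ▸ hz))
      obtain ⟨n, hn⟩ := (htend.eventually (Ioi_mem_nhds hzlt)).exists
      exact ⟨n, hn.le⟩
  · rw [not_bddAbove_iff] at h
    have h' : ∀ n : ℕ, ∃ s ∈ S, (n : ℝ) < s := fun n => h n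
    choose g hgS hgt using h'
    set y : ℕ → ℝ := fun n => Nat.rec (g 0) (fun k ih => max ih (g (k + 1))) n with hy
    have hstep : ∀ k, y (k + 1) = max (y k) (g (k + 1)) := fun k => rfl
    have hmem : ∀ n, y n ∈ S := by
      intro n
      induction n with
      | zero => exact hgS 0
      | succ k ih =>
        rw [hstep]
        rcases max_choice (y k) (g (k + 1)) with h1 | h1 <;> rw [h1]
        · exact ih
        · exact hgS _
    have hge : ∀ n, g n ≤ y n := by
      intro n
      cases n with
      | zero => exact le_rfl
      | succ k => rw [hstep]; exact le_max_right _ _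
    refine ⟨y, monotone_nat_of_le_succ fun n => by rw [hstep]; exact le_max_left _ _, hmem, ?_⟩
    intro z hz
    obtain ⟨n, hn⟩ := exists_nat_ge z
    exact ⟨n, hn.trans ((hgt n).le.trans (hge n))⟩

lemma exists_big_right (f : ℝ → ENNReal) (S : Set ℝ) (c : ℝ) (M : ENNReal) (hM : M ≠ ⊤)
    (hS : ∀ z ∈ S, c < z) (htop : ∫⁻ x in S, f x = ⊤) :
    ∃ y ∈ S, M < ∫⁻ x in Ioc c y, f x := by
  by_contra hcon
  push_neg at hcon
  have hSne : S.Nonempty := by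
    by_contra hne
    rw [not_nonempty_iff_eq_empty] at hne
    simp [hne] at htop
  obtain ⟨y, hmono, hmem, hcof⟩ := cofinal_seq S hSne
  have hsub : S ⊆ ⋃ n, Ioc c (y n) := by
    intro z hz
    obtain ⟨n, hn⟩ := hcof z hz
    exact mem_iUnion.2 ⟨n, hS z hz, hn⟩
  have hdir : Directed (· ⊆ ·) (fun n => Ioc c (y n)) :=
    (monotone_nat_of_le_succ fun n => Ioc_subset_Ioc_right (hmono (Nat.le_succ n))).directed_le
  have hν : (volume.withDensity f) (⋃ n, Ioc c (y n)) = ⨆ n, (volume.withDensity f) (Ioc c (y n)) :=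
    hdir.measure_iUnion
  have hle : ∫⁻ x in S, f x ≤ ⨆ n, ∫⁻ x in Ioc c (y n), f x := by
    calc ∫⁻ x in S, f x ≤ ∫⁻ x in ⋃ n, Ioc c (y n), f x := lintegral_mono_set hsub
    _ = (volume.withDensity f) (⋃ n, Ioc c (y n)) :=
        (withDensity_apply f (MeasurableSet.iUnion fun n => measurableSet_Ioc)).symm
    _ = ⨆ n, (volume.withDensity f) (Ioc c (y n)) := hν
    _ = ⨆ n, ∫⁻ x in Ioc c (y n), f x := by
        simp only [withDensity_apply f measurableSet_Ioc]
  rw [htop] at hle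
  have : (⊤ : ENNReal) ≤ M := hle.trans (iSup_le fun n => hcon (y n) (hmem n))
  exact hM (top_le_iff.1 this)

lemma exists_big_left (f : ℝ → ENNReal) (S : Set ℝ) (c : ℝ) (M : ENNReal) (hM : M ≠ ⊤)
    (hS : ∀ z ∈ S, z < c) (htop : ∫⁻ x in S, f x = ⊤) :
    ∃ y ∈ S, M < ∫⁻ x in Ico y c, f x := by
  by_contra hcon
  push_neg at hcon
  have hSne : S.Nonempty := by
    by_contra hne
    rw [not_nonempty_iff_eq_empty] at hne
    simp [hne] at htop
  obtain ⟨y, hmono, hmem, hcof⟩ := cofinal_seq ((fun x => -x) '' S) (hSne.image _)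
  have hmem' : ∀ n, -y n ∈ S := by
    intro n
    obtain ⟨z, hz, he⟩ := hmem n
    simpa [← he] using hz
  have hsub : S ⊆ ⋃ n, Ico (-y n) c := by
    intro z hz
    obtain ⟨n, hn⟩ := hcof (-z) ⟨z, hz, rfl⟩
    exact mem_iUnion.2 ⟨n, neg_le_of_neg_le hn, hS z hz⟩
  have hdir : Directed (· ⊆ ·) (fun n => Ico (-y n) c) :=
    (monotone_nat_of_le_succ fun n =>
      Ico_subset_Ico_left (neg_le_neg (hmono (Nat.le_succ n)) : -y (n+1) ≤ -y n)).directed_le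
  have hν : (volume.withDensity f) (⋃ n, Ico (-y n) c) = ⨆ n, (volume.withDensity f) (Ico (-y n) c) :=
    hdir.measure_iUnion
  have hle : ∫⁻ x in S, f x ≤ ⨆ n, ∫⁻ x in Ico (-y n) c, f x := by
    calc ∫⁻ x in S, f x ≤ ∫⁻ x in ⋃ n, Ico (-y n) c, f x := lintegral_mono_set hsub
    _ = (volume.withDensity f) (⋃ n, Ico (-y n) c) :=
        (withDensity_apply f (MeasurableSet.iUnion fun n => measurableSet_Ico)).symm
    _ = ⨆ n, (volume.withDensity f) (Ico (-y n) c) := hν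
    _ = ⨆ n, ∫⁻ x in Ico (-y n) c, f x := by
        simp only [withDensity_apply f measurableSet_Ico]
  rw [htop] at hle
  have : (⊤ : ENNReal) ≤ M := hle.trans (iSup_le fun n => hcon (-y n) (hmem' n))
  exact hM (top_le_iff.1 this)

lemma key_right (I : Set ℝ) (hIc : OrdConnected I) (u w W : ℝ → ℝ)
    (hupos : ∀ x ∈ I, 0 < u x) (hwpos : ∀ x ∈ I, 0 < w x)
    (hr : ∀ x ∈ I, HasDerivAt (fun y => w y / u y) (W x / (u x) ^ 2) x)
    (hWanti : AntitoneOn W I) (hWcont : ContinuousOn W I) (hucont : ContinuousOn u I)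
    (c : ℝ) (hc : c ∈ I) (hWc : W c < 0)
    (hdiv : ∫⁻ x in I ∩ Ioi c, ENNReal.ofReal (1 / (u x) ^ 2) = ⊤) : False := by
  set r : ℝ → ℝ := fun x => w x / u x with hrdef
  have hrc : 0 < r c := div_pos (hwpos c hc) (hupos c hc)
  obtain ⟨y, hyS, hy⟩ := exists_big_right _ (I ∩ Ioi c) c
    (ENNReal.ofReal (r c / (-W c))) ENNReal.ofReal_ne_top (fun z hz => hz.2) hdiv
  have hyI : y ∈ I := hyS.1
  have hcy : c < y := hyS.2
  have hIcc : Icc c y ⊆ I := hIc.out hc hyI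
  have hune : ∀ x ∈ Icc c y, u x ^ 2 ≠ 0 := fun x hx => pow_ne_zero 2 (hupos x (hIcc hx)).ne'
  have hfc : ContinuousOn (fun x => 1 / u x ^ 2) (Icc c y) :=
    continuousOn_const.div ((hucont.mono hIcc).pow 2) hune
  have hint : IntegrableOn (fun x => 1 / u x ^ 2) (Ioc c y) :=
    (hfc.integrableOn_Icc).mono_set Ioc_subset_Icc_self
  have heq : ENNReal.ofReal (∫ x in Ioc c y, 1 / u x ^ 2) =
      ∫⁻ x in Ioc c y, ENNReal.ofReal (1 / u x ^ 2) :=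
    ofReal_integral_eq_lintegral_ofReal hint
      (Filter.Eventually.of_forall fun x => by positivity)
  set T := ∫ x in Ioc c y, 1 / u x ^ 2 with hTdef
  have hMT : r c / (-W c) < T := by
    rw [← heq] at hy
    exact (ENNReal.ofReal_lt_ofReal_iff_of_nonneg
      (div_nonneg hrc.le (neg_pos.2 hWc).le)).1 hy
  have hT : ∫ x in c..y, 1 / u x ^ 2 = T := intervalIntegral.integral_of_le hcy.le
  have hderiv : ∀ x ∈ uIcc c y, HasDerivAt r (W x / u x ^ 2) x := by
    intro x hx
    rw [uIcc_of_le hcy.le] at hx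
    exact hr x (hIcc hx)
  have hWu : ContinuousOn (fun x => W x / u x ^ 2) (Icc c y) :=
    (hWcont.mono hIcc).div ((hucont.mono hIcc).pow 2) hune
  have hii : IntervalIntegrable (fun x => W x / u x ^ 2) volume c y := by
    apply ContinuousOn.intervalIntegrable
    rwa [uIcc_of_le hcy.le]
  have hii2 : IntervalIntegrable (fun x => W c / u x ^ 2) volume c y := by
    apply ContinuousOn.intervalIntegrable
    rw [uIcc_of_le hcy.le]
    exact continuousOn_const.div ((hucont.mono hIcc).pow 2) hune
  have hftc : ∫ x in c..y, W x / u x ^ 2 = r y - r c :=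
    intervalIntegral.integral_eq_sub_of_hasDerivAt hderiv hii
  have hmono2 : ∫ x in c..y, W x / u x ^ 2 ≤ ∫ x in c..y, W c / u x ^ 2 := by
    apply intervalIntegral.integral_mono_on hcy.le hii hii2
    intro x hx
    exact (div_le_div_iff_of_pos_right (lt_of_le_of_ne (sq_nonneg _) (Ne.symm (hune x hx)))).2
      (hWanti hc (hIcc hx) hx.1)
  have hconst : ∫ x in c..y, W c / u x ^ 2 = W c * T := by
    have he : ∀ x : ℝ, W c / u x ^ 2 = W c * (1 / u x ^ 2) := fun x => div_eq_mul_one_div _ _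
    simp_rw [he]
    rw [intervalIntegral.integral_const_mul, hT]
  have h1 : W c * T < W c * (r c / -W c) := mul_lt_mul_of_neg_left hMT hWc
  have h2 : W c * (r c / -W c) = -(r c) := by
    have hWne : -W c ≠ 0 := (neg_pos.2 hWc).ne'
    have hWne' : W c ≠ 0 := hWc.ne
    field_simp
  have hry : 0 < r y := div_pos (hwpos y hyI) (hupos y hyI)
  linarith

lemma key_left (I : Set ℝ) (hIc : OrdConnected I) (u w W : ℝ → ℝ)
    (hupos : ∀ x ∈ I, 0 < u x) (hwpos : ∀ x ∈ I, 0 < w x)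
    (hr : ∀ x ∈ I, HasDerivAt (fun y => w y / u y) (W x / (u x) ^ 2) x)
    (hWanti : AntitoneOn W I) (hWcont : ContinuousOn W I) (hucont : ContinuousOn u I)
    (c : ℝ) (hc : c ∈ I) (hWc : 0 < W c)
    (hdiv : ∫⁻ x in I ∩ Iio c, ENNReal.ofReal (1 / (u x) ^ 2) = ⊤) : False := by
  set r : ℝ → ℝ := fun x => w x / u x with hrdef
  have hrc : 0 < r c := div_pos (hwpos c hc) (hupos c hc)
  obtain ⟨y, hyS, hy⟩ := exists_big_left _ (I ∩ Iio c) c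
    (ENNReal.ofReal (r c / W c)) ENNReal.ofReal_ne_top (fun z hz => hz.2) hdiv
  have hyI : y ∈ I := hyS.1
  have hcy : y < c := hyS.2
  have hIcc : Icc y c ⊆ I := hIc.out hyI hc
  have hune : ∀ x ∈ Icc y c, u x ^ 2 ≠ 0 := fun x hx => pow_ne_zero 2 (hupos x (hIcc hx)).ne'
  have hfc : ContinuousOn (fun x => 1 / u x ^ 2) (Icc y c) :=
    continuousOn_const.div ((hucont.mono hIcc).pow 2) hune
  have hint : IntegrableOn (fun x => 1 / u x ^ 2) (Ioc y c) :=
    (hfc.integrableOn_Icc).mono_set Ioc_subset_Icc_self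
  have heq : ENNReal.ofReal (∫ x in Ioc y c, 1 / u x ^ 2) =
      ∫⁻ x in Ioc y c, ENNReal.ofReal (1 / u x ^ 2) :=
    ofReal_integral_eq_lintegral_ofReal hint
      (Filter.Eventually.of_forall fun x => by positivity)
  set T := ∫ x in Ioc y c, 1 / u x ^ 2 with hTdef
  have hMT : r c / W c < T := by
    rw [MeasureTheory.restrict_Ico_eq_restrict_Ioc, ← heq] at hy
    exact (ENNReal.ofReal_lt_ofReal_iff_of_nonneg (div_nonneg hrc.le hWc.le)).1 hy
  have hT : ∫ x in y..c, 1 / u x ^ 2 = T := intervalIntegral.integral_of_le hcy.le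
  have hderiv : ∀ x ∈ uIcc y c, HasDerivAt r (W x / u x ^ 2) x := by
    intro x hx
    rw [uIcc_of_le hcy.le] at hx
    exact hr x (hIcc hx)
  have hii : IntervalIntegrable (fun x => W x / u x ^ 2) volume y c := by
    apply ContinuousOn.intervalIntegrable
    rw [uIcc_of_le hcy.le]
    exact (hWcont.mono hIcc).div ((hucont.mono hIcc).pow 2) hune
  have hii2 : IntervalIntegrable (fun x => W c / u x ^ 2) volume y c := by
    apply ContinuousOn.intervalIntegrable
    rw [uIcc_of_le hcy.le]
    exact continuousOn_const.div ((hucont.mono hIcc).pow 2) hune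
  have hftc : ∫ x in y..c, W x / u x ^ 2 = r c - r y :=
    intervalIntegral.integral_eq_sub_of_hasDerivAt hderiv hii
  have hmono2 : ∫ x in y..c, W c / u x ^ 2 ≤ ∫ x in y..c, W x / u x ^ 2 := by
    apply intervalIntegral.integral_mono_on hcy.le hii2 hii
    intro x hx
    exact (div_le_div_iff_of_pos_right (lt_of_le_of_ne (sq_nonneg _) (Ne.symm (hune x hx)))).2
      (hWanti (hIcc hx) hc hx.2)
  have hconst : ∫ x in y..c, W c / u x ^ 2 = W c * T := by
    have he : ∀ x : ℝ, W c / u x ^ 2 = W c * (1 / u x ^ 2) := fun x => div_eq_mul_one_div _ _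
    simp_rw [he]
    rw [intervalIntegral.integral_const_mul, hT]
  have h1 : W c * (r c / W c) < W c * T := mul_lt_mul_of_pos_left hMT hWc
  have h2 : W c * (r c / W c) = r c := by
    field_simp
  have hry : 0 < r y := div_pos (hwpos y hyI) (hupos y hyI)
  linarith

lemma div_shift_right (I : Set ℝ) (hIc : OrdConnected I) (u : ℝ → ℝ)
    (hupos : ∀ x ∈ I, 0 < u x) (hucont : ContinuousOn u I)
    (x₀ c : ℝ) (hx₀ : x₀ ∈ I) (hc : c ∈ I)
    (hdiv : ∫⁻ x in I ∩ Ioi x₀, ENNReal.ofReal (1 / (u x) ^ 2) = ⊤) :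
    ∫⁻ x in I ∩ Ioi c, ENNReal.ofReal (1 / (u x) ^ 2) = ⊤ := by
  rcases le_or_gt c x₀ with h | h
  · exact top_le_iff.1 (hdiv ▸ lintegral_mono_set
      (inter_subset_inter_right _ (Ioi_subset_Ioi h)))
  · have hIcc : Icc x₀ c ⊆ I := hIc.out hx₀ hc
    have hfc : ContinuousOn (fun x => 1 / u x ^ 2) (Icc x₀ c) :=
      continuousOn_const.div ((hucont.mono hIcc).pow 2)
        (fun x hx => pow_ne_zero 2 (hupos x (hIcc hx)).ne')
    obtain ⟨z, hz, hzb⟩ := isCompact_Icc.exists_isMaxOn (nonempty_Icc.2 h.le) hfc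
    have hfin : ∫⁻ x in Ioc x₀ c, ENNReal.ofReal (1 / u x ^ 2) ≠ ⊤ := by
      have hb : ∫⁻ x in Ioc x₀ c, ENNReal.ofReal (1 / u x ^ 2) ≤
          ENNReal.ofReal (1 / u z ^ 2) * volume (Ioc x₀ c) := by
        rw [← setLIntegral_const]
        exact setLIntegral_mono' measurableSet_Ioc
          (fun x hx => ENNReal.ofReal_le_ofReal (hzb (Ioc_subset_Icc_self hx)))
      refine ne_top_of_le_ne_top ?_ hb
      exact ENNReal.mul_ne_top ENNReal.ofReal_ne_top (by simp [Real.volume_Ioc])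
    have hsub : I ∩ Ioi x₀ ⊆ Ioc x₀ c ∪ (I ∩ Ioi c) := by
      rintro t ⟨htI, ht⟩
      rcases le_or_gt t c with h' | h'
      · exact Or.inl ⟨ht, h'⟩
      · exact Or.inr ⟨htI, h'⟩
    by_contra htar
    have h1 : (⊤ : ENNReal) ≤ ∫⁻ x in Ioc x₀ c ∪ (I ∩ Ioi c), ENNReal.ofReal (1 / u x ^ 2) :=
      hdiv ▸ lintegral_mono_set hsub
    have h2 := h1.trans (lintegral_union_le _ _ _)
    exact (ENNReal.add_ne_top.2 ⟨hfin, htar⟩) (top_le_iff.1 h2)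

lemma div_shift_left (I : Set ℝ) (hIc : OrdConnected I) (u : ℝ → ℝ)
    (hupos : ∀ x ∈ I, 0 < u x) (hucont : ContinuousOn u I)
    (x₀ c : ℝ) (hx₀ : x₀ ∈ I) (hc : c ∈ I)
    (hdiv : ∫⁻ x in I ∩ Iio x₀, ENNReal.ofReal (1 / (u x) ^ 2) = ⊤) :
    ∫⁻ x in I ∩ Iio c, ENNReal.ofReal (1 / (u x) ^ 2) = ⊤ := by
  rcases le_or_gt x₀ c with h | h
  · exact top_le_iff.1 (hdiv ▸ lintegral_mono_set
      (inter_subset_inter_right _ (Iio_subset_Iio h)))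
  · have hIcc : Icc c x₀ ⊆ I := hIc.out hc hx₀
    have hfc : ContinuousOn (fun x => 1 / u x ^ 2) (Icc c x₀) :=
      continuousOn_const.div ((hucont.mono hIcc).pow 2)
        (fun x hx => pow_ne_zero 2 (hupos x (hIcc hx)).ne')
    obtain ⟨z, hz, hzb⟩ := isCompact_Icc.exists_isMaxOn (nonempty_Icc.2 h.le) hfc
    have hfin : ∫⁻ x in Ico c x₀, ENNReal.ofReal (1 / u x ^ 2) ≠ ⊤ := by
      have hb : ∫⁻ x in Ico c x₀, ENNReal.ofReal (1 / u x ^ 2) ≤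
          ENNReal.ofReal (1 / u z ^ 2) * volume (Ico c x₀) := by
        rw [← setLIntegral_const]
        exact setLIntegral_mono' measurableSet_Ico
          (fun x hx => ENNReal.ofReal_le_ofReal (hzb (Ico_subset_Icc_self hx)))
      refine ne_top_of_le_ne_top ?_ hb
      exact ENNReal.mul_ne_top ENNReal.ofReal_ne_top (by simp [Real.volume_Ico])
    have hsub : I ∩ Iio x₀ ⊆ Ico c x₀ ∪ (I ∩ Iio c) := by
      rintro t ⟨htI, ht⟩
      rcases le_or_gt c t with h' | h'
      · exact Or.inl ⟨h', ht⟩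
      · exact Or.inr ⟨htI, h'⟩
    by_contra htar
    have h1 : (⊤ : ENNReal) ≤ ∫⁻ x in Ico c x₀ ∪ (I ∩ Iio c), ENNReal.ofReal (1 / u x ^ 2) :=
      hdiv ▸ lintegral_mono_set hsub
    have h2 := h1.trans (lintegral_union_le _ _ _)
    exact (ENNReal.add_ne_top.2 ⟨hfin, htar⟩) (top_le_iff.1 h2)

lemma key_main (I : Set ℝ) (hIo : IsOpen I) (hIc : OrdConnected I)
    (p P u w : ℝ → ℝ) (x₀ : ℝ) (hx₀ : x₀ ∈ I)
    (hp : ContinuousOn p I) (hP : ContinuousOn P I)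
    (hPp : ∀ x ∈ I, p x ≤ P x) (hne : ∃ x ∈ I, P x ≠ p x)
    (hu : ∀ x ∈ I, HasDerivAt u (deriv u x) x ∧ HasDerivAt (deriv u) (-(p x * u x)) x)
    (hupos : ∀ x ∈ I, 0 < u x)
    (hdiva : ∫⁻ x in I ∩ Iio x₀, ENNReal.ofReal (1 / (u x) ^ 2) = ⊤)
    (hdivb : ∫⁻ x in I ∩ Ioi x₀, ENNReal.ofReal (1 / (u x) ^ 2) = ⊤)
    (hw : ∀ x ∈ I, HasDerivAt w (deriv w x) x ∧ HasDerivAt (deriv w) (-(P x * w x)) x)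
    (hwpos : ∀ x ∈ I, 0 < w x) : False := by
  have hucont : ContinuousOn u I := fun x hx => ((hu x hx).1.continuousAt).continuousWithinAt
  have hwcont : ContinuousOn w I := fun x hx => ((hw x hx).1.continuousAt).continuousWithinAt
  set W : ℝ → ℝ := fun x => deriv w x * u x - w x * deriv u x with hWdef
  have hW' : ∀ x ∈ I, HasDerivAt W ((p x - P x) * (u x * w x)) x := by
    intro x hx
    have h1 := ((hw x hx).2.mul (hu x hx).1)
    have h2 := ((hw x hx).1.mul (hu x hx).2)
    have h3 := h1.sub h2
    refine h3.congr_deriv ?_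
    ring
  have hWderiv : ∀ x ∈ I, deriv W x = (p x - P x) * (u x * w x) := fun x hx => (hW' x hx).deriv
  have hWcont : ContinuousOn W I := fun x hx =>
    ((hW' x hx).continuousAt).continuousWithinAt
  have hWanti : AntitoneOn W I := by
    apply antitoneOn_of_deriv_nonpos ((convex_iff_ordConnected (𝕜 := ℝ)).2 hIc) hWcont
    · rw [hIo.interior_eq]
      exact fun x hx => (hW' x hx).differentiableAt.differentiableWithinAt
    · rw [hIo.interior_eq]
      intro x hx
      rw [hWderiv x hx]
      exact mul_nonpos_of_nonpos_of_nonneg (sub_nonpos.2 (hPp x hx))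
        (mul_pos (hupos x hx) (hwpos x hx)).le
  have hr : ∀ x ∈ I, HasDerivAt (fun y => w y / u y) (W x / (u x) ^ 2) x := by
    intro x hx
    exact ((hw x hx).1.div (hu x hx).1 (hupos x hx).ne')
  -- find strict decrease
  obtain ⟨z, hzI, hzne⟩ := hne
  set g : ℝ → ℝ := fun x => (p x - P x) * (u x * w x) with hgdef
  have hgz : g z < 0 := mul_neg_of_neg_of_pos
    (sub_neg.2 (lt_of_le_of_ne (hPp z hzI) (Ne.symm hzne)))
    (mul_pos (hupos z hzI) (hwpos z hzI))
  have hgc : ContinuousAt g z :=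
    (((hp.sub hP).mul (hucont.mul hwcont))).continuousAt (hIo.mem_nhds hzI)
  have hev : ∀ᶠ x in nhds z, g x < 0 ∧ x ∈ I := by
    have h1 : ∀ᶠ x in nhds z, g x < 0 := hgc.eventually_lt continuousAt_const hgz
    exact h1.and (hIo.mem_nhds hzI)
  obtain ⟨ε, hε, hball⟩ := Metric.eventually_nhds_iff.1 hev
  have hIoosub : Ioo (z - ε) (z + ε) ⊆ I := by
    intro x hx
    exact (hball (by rw [Real.dist_eq]; rw [mem_Ioo] at hx; rw [abs_lt]; constructor <;> linarith)).2
  have hsa : StrictAntiOn W (Ioo (z - ε) (z + ε)) := by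
    apply strictAntiOn_of_deriv_neg (convex_Ioo _ _) (hWcont.mono hIoosub)
    rw [interior_Ioo]
    intro x hx
    rw [hWderiv x (hIoosub hx)]
    exact (hball (by rw [Real.dist_eq]; rw [mem_Ioo] at hx; rw [abs_lt]; constructor <;> linarith)).1
  have hz1m : z - ε / 2 ∈ Ioo (z - ε) (z + ε) := by constructor <;> linarith
  have hz2m : z + ε / 2 ∈ Ioo (z - ε) (z + ε) := by constructor <;> linarith
  have hW12 : W (z + ε / 2) < W (z - ε / 2) := hsa hz1m hz2m (by linarith)
  by_cases hA : ∃ c ∈ I, W c < 0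
  · obtain ⟨c, hcI, hWc⟩ := hA
    exact key_right I hIc u w W hupos hwpos hr hWanti hWcont hucont c hcI hWc
      (div_shift_right I hIc u hupos hucont x₀ c hx₀ hcI hdivb)
  · push_neg at hA
    have hz2I : z + ε / 2 ∈ I := hIoosub hz2m
    have hz1I : z - ε / 2 ∈ I := hIoosub hz1m
    have hWpos : 0 < W (z - ε / 2) := lt_of_le_of_lt (hA _ hz2I) hW12
    exact key_left I hIc u w W hupos hwpos hr hWanti hWcont hucont _ hz1I hWpos
      (div_shift_left I hIc u hupos hucont x₀ _ hx₀ hz1I hdiva)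

/-- Singular Sturm comparison theorem on a possibly infinite open interval. -/
theorem singular_sturm_comparison (a b : EReal) (hab : a < b)
    (p P u v : ℝ → ℝ) (x₀ : ℝ)
    (I : Set ℝ) (hI : I = {x : ℝ | a < (x : EReal) ∧ (x : EReal) < b})
    (hx₀ : x₀ ∈ I)
    (hp : ContinuousOn p I) (hP : ContinuousOn P I)
    (hPp : ∀ x ∈ I, p x ≤ P x) (hne : ∃ x ∈ I, P x ≠ p x)
    (hu : ∀ x ∈ I, HasDerivAt u (deriv u x) x ∧ HasDerivAt (deriv u) (-(p x * u x)) x)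
    (hupos : ∀ x ∈ I, 0 < u x)
    (hdiva : ∫⁻ x in I ∩ Iio x₀, ENNReal.ofReal (1 / (u x) ^ 2) = ⊤)
    (hdivb : ∫⁻ x in I ∩ Ioi x₀, ENNReal.ofReal (1 / (u x) ^ 2) = ⊤)
    (hv : ∀ x ∈ I, HasDerivAt v (deriv v x) x ∧ HasDerivAt (deriv v) (-(P x * v x)) x) :
    ∃ x ∈ I, v x = 0 := by
  have hIo : IsOpen I := by
    rw [hI]
    have : {x : ℝ | a < (x : EReal) ∧ (x : EReal) < b} =
        Real.toEReal ⁻¹' (Ioi a ∩ Iio b) := rfl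
    rw [this]
    exact (isOpen_Ioi.inter isOpen_Iio).preimage continuous_coe_real_ereal
  have hIc : OrdConnected I := by
    rw [hI]
    constructor
    intro x hx y hy z hz
    exact ⟨lt_of_lt_of_le hx.1 (EReal.coe_le_coe_iff.2 hz.1),
      lt_of_le_of_lt (EReal.coe_le_coe_iff.2 hz.2) hy.2⟩
  by_contra h
  push_neg at h
  have hvcont : ContinuousOn v I := fun x hx => ((hv x hx).1.continuousAt).continuousWithinAt
  have hsign : (∀ x ∈ I, 0 < v x) ∨ (∀ x ∈ I, v x < 0) := by
    by_contra hns
    push_neg at hns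
    obtain ⟨⟨x1, hx1, hx1'⟩, ⟨x2, hx2, hx2'⟩⟩ := hns
    have hsub : uIcc x1 x2 ⊆ I := hIc.uIcc_subset hx1 hx2
    have h0 : (0 : ℝ) ∈ uIcc (v x1) (v x2) := mem_uIcc.2 (Or.inl ⟨hx1', hx2'⟩)
    obtain ⟨z, hzmem, hz0⟩ := intermediate_value_uIcc (hvcont.mono hsub) h0
    exact h z (hsub hzmem) hz0
  rcases hsign with hpos | hneg
  · exact absurd (key_main I hIo hIc p P u v x₀ hx₀ hp hP hPp hne hu hupos hdiva hdivb hv hpos)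
      not_false
  · have hdneg : (deriv fun y => -v y) = fun x => -(deriv v x) := funext fun x => deriv.neg
    have hw : ∀ x ∈ I, HasDerivAt (fun y => -v y) (deriv (fun y => -v y) x) x ∧
        HasDerivAt (deriv fun y => -v y) (-(P x * (-v x))) x := by
      intro x hx
      constructor
      · rw [hdneg]
        exact ((hv x hx).1).neg
      · rw [hdneg]
        have h2 := ((hv x hx).2).neg
        refine h2.congr_deriv ?_
        ring
    exact absurd (key_main I hIo hIc p P u (fun y => -v y) x₀ hx₀ hp hP hPp hne hu hupos
      hdiva hdivb hw (fun x hx => neg_pos.2 (hneg x hx))) not_false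
end

section
/- Let p be continuous on an open interval (a,b) (possibly infinite). If a solution u of u'' + p u = 0 is positive on (a,b) and satisfies ∫_a^{x₀} dx/u² = ∞ and ∫_{x₀}^b dx/u² = ∞, then every solution of the same equation that is linearly independent of u has a zero in (a,b). -/
open MeasureTheory Set

lemma rat_near (S : Set ℝ) (hS : IsOpen S) {x : ℝ} (hx : x ∈ S) :
    ∃ q r : ℚ, (q:ℝ) ∈ S ∧ (r:ℝ) ∈ S ∧ (q:ℝ) ≤ x ∧ x ≤ (r:ℝ) := by
  obtain ⟨ε, εpos, hball⟩ := Metric.isOpen_iff.1 hS x hx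
  obtain ⟨q, hq1, hq2⟩ := exists_rat_btwn (show x - ε < x by linarith)
  obtain ⟨r, hr1, hr2⟩ := exists_rat_btwn (show x < x + ε by linarith)
  refine ⟨q, r, hball ?_, hball ?_, le_of_lt hq2, le_of_lt hr1⟩
  · rw [Metric.mem_ball, Real.dist_eq, abs_lt]; constructor <;> linarith
  · rw [Metric.mem_ball, Real.dist_eq, abs_lt]; constructor <;> linarith

lemma aux_exists (S : Set ℝ) (hS : IsOpen S) (hoc : S.OrdConnected)
    (f : ℝ → ℝ) (hf : ContinuousOn f S) (hf0 : ∀ x, 0 ≤ f x)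
    (hdiv : ∫⁻ x in S, ENNReal.ofReal (f x) = ⊤) (M : ℝ) :
    ∃ c ∈ S, ∃ d ∈ S, c ≤ d ∧ M < ∫ x in Ioo c d, f x := by
  by_contra hcon
  push_neg at hcon
  rcases S.eq_empty_or_nonempty with hSe | ⟨x0, hx0⟩
  · rw [hSe] at hdiv; simp at hdiv
  set T : Set ℝ := S ∩ Set.range ((↑) : ℚ → ℝ) with hT
  have hTc : T.Countable := (Set.countable_range _).mono Set.inter_subset_right
  have hTne : T.Nonempty := by
    obtain ⟨q, _, hq⟩ := rat_near S hS hx0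
    exact ⟨(q:ℝ), hq.1, ⟨q, rfl⟩⟩
  obtain ⟨e, he⟩ := hTc.exists_eq_range hTne
  have heS : ∀ n, e n ∈ S := fun n => by
    have : e n ∈ T := he ▸ ⟨n, rfl⟩
    exact this.1
  set c : ℕ → ℝ := fun n => (Finset.range (n+1)).inf' (by simp) e with hc
  set d : ℕ → ℝ := fun n => (Finset.range (n+1)).sup' (by simp) e with hd
  have hcS : ∀ n, c n ∈ S := fun n => by
    obtain ⟨i, _, hi⟩ := Finset.exists_mem_eq_inf' (by simp) e (s := Finset.range (n+1))
    rw [hc]; simp only; rw [hi]; exact heS i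
  have hdS : ∀ n, d n ∈ S := fun n => by
    obtain ⟨i, _, hi⟩ := Finset.exists_mem_eq_sup' (by simp) e (s := Finset.range (n+1))
    rw [hd]; simp only; rw [hi]; exact heS i
  have hcd : ∀ n, c n ≤ d n := fun n =>
    le_trans (Finset.inf'_le e (by simp : 0 ∈ Finset.range (n+1)))
      (Finset.le_sup' e (by simp : 0 ∈ Finset.range (n+1)))
  have hmono : ∀ ⦃n m⦄, n ≤ m → Icc (c n) (d n) ⊆ Icc (c m) (d m) := by
    intro n m hnm
    apply Icc_subset_Icc
    · exact Finset.inf'_mono e (Finset.range_subset_range.2 (by omega)) _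
    · exact Finset.sup'_mono e (Finset.range_subset_range.2 (by omega)) _
  have hsub : ∀ n, Icc (c n) (d n) ⊆ S := fun n => hoc.out (hcS n) (hdS n)
  have hcover : ∀ x ∈ S, ∃ n, x ∈ Icc (c n) (d n) := by
    intro x hx
    obtain ⟨q, r, hqS, hrS, hqx, hxr⟩ := rat_near S hS hx
    have hqT : (q:ℝ) ∈ Set.range e := he ▸ ⟨hqS, ⟨q, rfl⟩⟩
    have hrT : (r:ℝ) ∈ Set.range e := he ▸ ⟨hrS, ⟨r, rfl⟩⟩
    obtain ⟨i, hi⟩ := hqT; obtain ⟨j, hj⟩ := hrT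
    refine ⟨max i j, ?_, ?_⟩
    · calc c (max i j) ≤ e i := Finset.inf'_le e (by simp)
        _ ≤ x := hi ▸ hqx
    · calc x ≤ e j := hj ▸ hxr
        _ ≤ d (max i j) := Finset.le_sup' e (by simp)
  set F : ℝ → ENNReal := fun x => ENNReal.ofReal (f x) with hF
  set g : ℕ → ℝ → ENNReal := fun n => (Icc (c n) (d n)).indicator F with hg
  have hgmono : ∀ x, Monotone fun n => g n x := by
    intro x n m hnm
    exact Set.indicator_le_indicator_of_subset (hmono hnm) (fun _ => zero_le) x
  have hgsup : ∀ x, (⨆ n, g n x) = S.indicator F x := by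
    intro x
    by_cases hx : x ∈ S
    · obtain ⟨n, hn⟩ := hcover x hx
      rw [Set.indicator_of_mem hx]
      apply le_antisymm
      · exact iSup_le fun m => Set.indicator_le_self _ _ x
      · calc F x = g n x := by rw [hg]; simp [Set.indicator_of_mem hn]
          _ ≤ _ := le_iSup (fun n => g n x) n
    · rw [Set.indicator_of_notMem hx]
      simp only [ENNReal.iSup_eq_zero]
      intro n
      exact Set.indicator_of_notMem (fun h => hx (hsub n h)) _
  have hgm : ∀ n, AEMeasurable (g n) volume := by
    intro n
    rw [hg]; simp only
    rw [aemeasurable_indicator_iff measurableSet_Icc]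
    exact ENNReal.measurable_ofReal.comp_aemeasurable
      ((hf.mono (hsub n)).aemeasurable measurableSet_Icc)
  have key : ∫⁻ x in S, F x ≤ ENNReal.ofReal (max M 0) := by
    rw [← lintegral_indicator hS.measurableSet]
    have : ∀ x, S.indicator F x = ⨆ n, g n x := fun x => (hgsup x).symm
    simp_rw [this]
    rw [lintegral_iSup' hgm (ae_of_all _ hgmono)]
    apply iSup_le
    intro n
    rw [hg]; simp only
    rw [lintegral_indicator measurableSet_Icc]
    have hint : IntegrableOn f (Icc (c n) (d n)) volume :=
      (hf.mono (hsub n)).integrableOn_Icc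
    rw [hF]; simp only
    rw [← ofReal_integral_eq_lintegral_ofReal hint (ae_of_all _ hf0)]
    apply ENNReal.ofReal_le_ofReal
    rw [MeasureTheory.integral_Icc_eq_integral_Ioo]
    exact le_trans (hcon _ (hcS n) _ (hdS n) (hcd n)) (le_max_left M 0)
  rw [hdiv] at key
  simp at key

lemma sign_lemma (C g0 X Y T₁ T₂ : ℝ) (h1 : g0 - X = C * T₁) (h2 : Y - g0 = C * T₂)
    (ha1 : |g0| < |C| * T₁) (ha2 : |g0| < |C| * T₂) : X * Y < 0 := by
  rcases lt_trichotomy C 0 with h | h | h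
  · rw [abs_of_neg h, neg_mul] at ha1 ha2
    have hX : 0 < X := by linarith [neg_abs_le g0]
    have hY : Y < 0 := by linarith [le_abs_self g0]
    exact mul_neg_of_pos_of_neg hX hY
  · rw [h] at ha1; simp at ha1
    exact absurd ha1 (not_lt.2 (abs_nonneg g0))
  · rw [abs_of_pos h] at ha1 ha2
    have hX : X < 0 := by linarith [le_abs_self g0]
    have hY : 0 < Y := by linarith [neg_abs_le g0]
    exact mul_neg_of_neg_of_pos hX hY

/-- Singular Sturm separation theorem on a possibly infinite open interval. -/
theorem singular_sturm_separation (a b : EReal) (hab : a < b)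
    (p u w : ℝ → ℝ) (x₀ : ℝ)
    (I : Set ℝ) (hI : I = {x : ℝ | a < (x : EReal) ∧ (x : EReal) < b})
    (hx₀ : x₀ ∈ I)
    (hp : ContinuousOn p I)
    (hu : ∀ x ∈ I, HasDerivAt u (deriv u x) x ∧ HasDerivAt (deriv u) (-(p x * u x)) x)
    (hupos : ∀ x ∈ I, 0 < u x)
    (hdiva : ∫⁻ x in I ∩ Iio x₀, ENNReal.ofReal (1 / (u x) ^ 2) = ⊤)
    (hdivb : ∫⁻ x in I ∩ Ioi x₀, ENNReal.ofReal (1 / (u x) ^ 2) = ⊤)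
    (hw : ∀ x ∈ I, HasDerivAt w (deriv w x) x ∧ HasDerivAt (deriv w) (-(p x * w x)) x)
    (hindep : ∃ x ∈ I, u x * deriv w x - deriv u x * w x ≠ 0) :
    ∃ x ∈ I, w x = 0 := by
  -- basic structure of I
  have hIopen : IsOpen I := by
    have : I = ((↑) : ℝ → EReal) ⁻¹' (Set.Ioo a b) := by
      rw [hI]; ext x; simp [Set.mem_Ioo]
    rw [this]
    exact isOpen_Ioo.preimage continuous_coe_real_ereal
  have hIoc : I.OrdConnected := by
    constructor
    intro x hx y hy z hz
    rw [hI] at hx hy ⊢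
    exact ⟨lt_of_lt_of_le hx.1 (EReal.coe_le_coe_iff.2 hz.1),
      lt_of_le_of_lt (EReal.coe_le_coe_iff.2 hz.2) hy.2⟩
  have hIcc : ∀ x ∈ I, ∀ y ∈ I, Icc x y ⊆ I := fun x hx y hy => hIoc.out hx hy
  have hucont : ContinuousOn u I := fun x hx => ((hu x hx).1).continuousAt.continuousWithinAt
  have hwcont : ContinuousOn w I := fun x hx => ((hw x hx).1).continuousAt.continuousWithinAt
  -- the Wronskian
  set W : ℝ → ℝ := fun x => u x * deriv w x - deriv u x * w x with hWdef
  have hWd : ∀ x ∈ I, HasDerivAt W 0 x := by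
    intro x hx
    have h := (((hu x hx).1).mul ((hw x hx).2)).sub (((hu x hx).2).mul ((hw x hx).1))
    refine h.congr_deriv ?_
    ring
  have hWconst : ∀ x ∈ I, ∀ y ∈ I, W x = W y := by
    have key : ∀ x ∈ I, ∀ y ∈ I, x ≤ y → W x = W y := by
      intro x hx y hy hxy
      have h : W y - W x = ∫ t in x..y, (0:ℝ) := by
        refine (intervalIntegral.integral_eq_sub_of_hasDerivAt ?_ ?_).symm
        · intro t ht
          rw [Set.uIcc_of_le hxy] at ht
          exact hWd t (hIcc x hx y hy ht)
        · exact intervalIntegrable_const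
      simp at h
      linarith
    intro x hx y hy
    rcases le_total x y with h | h
    · exact key x hx y hy h
    · exact (key y hy x hx h).symm
  set C : ℝ := W x₀ with hCdef
  have hC : C ≠ 0 := by
    obtain ⟨z, hz, hzne⟩ := hindep
    rw [hCdef, hWconst x₀ hx₀ z hz]
    exact hzne
  -- derivative of w/u
  have hg : ∀ x ∈ I, HasDerivAt (fun t => w t / u t) (C / u x ^ 2) x := by
    intro x hx
    have h := ((hw x hx).1).div ((hu x hx).1) (ne_of_gt (hupos x hx))
    refine h.congr_deriv ?_
    rw [hCdef, hWconst x₀ hx₀ x hx, hWdef]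
    ring
  -- FTC
  set f : ℝ → ℝ := fun t => 1 / u t ^ 2 with hfdef
  have hfcont : ContinuousOn f I := by
    apply continuousOn_const.div ((hucont.pow 2))
    intro x hx
    exact pow_ne_zero 2 (ne_of_gt (hupos x hx))
  have hf0 : ∀ x, 0 ≤ f x := fun x => by rw [hfdef]; positivity
  have hFTC : ∀ x ∈ I, ∀ y ∈ I, x ≤ y →
      w y / u y - w x / u x = C * ∫ t in x..y, f t := by
    intro x hx y hy hxy
    have h : w y / u y - w x / u x = ∫ t in x..y, C / u t ^ 2 := by
      refine (intervalIntegral.integral_eq_sub_of_hasDerivAt (f := fun t => w t / u t) ?_ ?_).symm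
      · intro t ht
        rw [Set.uIcc_of_le hxy] at ht
        exact hg t (hIcc x hx y hy ht)
      · apply ContinuousOn.intervalIntegrable
        apply continuousOn_const.div (((hucont.mono ?_).pow 2))
        · intro t ht
          rw [Set.uIcc_of_le hxy] at ht
          exact pow_ne_zero 2 (ne_of_gt (hupos t (hIcc x hx y hy ht)))
        · rw [Set.uIcc_of_le hxy]; exact hIcc x hx y hy
    rw [h, ← intervalIntegral.integral_const_mul]
    congr 1
    ext t
    rw [hfdef]
    ring
  -- obtain points with large integrals on both sides
  set g0 : ℝ := w x₀ / u x₀ with hg0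
  set M : ℝ := |g0| / |C| with hM
  have hM0 : 0 ≤ M := by positivity
  have habsC : 0 < |C| := abs_pos.2 hC
  have hCM : |C| * M = |g0| := by
    rw [hM]; field_simp
  obtain ⟨c, hc, d, hd, hcd, hintL⟩ := aux_exists (I ∩ Iio x₀)
    (hIopen.inter isOpen_Iio) (hIoc.inter Set.ordConnected_Iio)
    f (hfcont.mono Set.inter_subset_left) hf0 hdiva M
  obtain ⟨c', hc', d', hd', hcd', hintR⟩ := aux_exists (I ∩ Ioi x₀)
    (hIopen.inter isOpen_Ioi) (hIoc.inter Set.ordConnected_Ioi)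
    f (hfcont.mono Set.inter_subset_left) hf0 hdivb M
  have hcI : c ∈ I := hc.1
  have hcx : c < x₀ := hc.2
  have hdI' : d' ∈ I := hd'.1
  have hxd' : x₀ < d' := hc'.2.trans_le hcd'
  set T₁ : ℝ := ∫ t in c..x₀, f t with hT1
  set T₂ : ℝ := ∫ t in x₀..d', f t with hT2
  have hT1M : M < T₁ := by
    rw [hT1, intervalIntegral.integral_of_le hcx.le]
    refine lt_of_lt_of_le hintL ?_
    apply setIntegral_mono_set
    · exact ((hfcont.mono (hIcc c hcI x₀ hx₀)).integrableOn_Icc).mono_set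
        Set.Ioc_subset_Icc_self
    · exact Filter.Eventually.of_forall hf0
    · exact HasSubset.Subset.eventuallyLE
        (fun t ht => ⟨ht.1, (ht.2.trans hd.2).le⟩)
  have hT2M : M < T₂ := by
    rw [hT2, intervalIntegral.integral_of_le hxd'.le]
    refine lt_of_lt_of_le hintR ?_
    apply setIntegral_mono_set
    · exact ((hfcont.mono (hIcc x₀ hx₀ d' hdI')).integrableOn_Icc).mono_set
        Set.Ioc_subset_Icc_self
    · exact Filter.Eventually.of_forall hf0
    · exact HasSubset.Subset.eventuallyLE
        (fun t ht => ⟨hc'.2.trans ht.1, ht.2.le⟩)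
  have heq1 : g0 - w c / u c = C * T₁ := hFTC c hcI x₀ hx₀ hcx.le
  have heq2 : w d' / u d' - g0 = C * T₂ := hFTC x₀ hx₀ d' hdI' hxd'.le
  have habs1 : |g0| < |C| * T₁ := hCM ▸ (mul_lt_mul_of_pos_left hT1M habsC)
  have habs2 : |g0| < |C| * T₂ := hCM ▸ (mul_lt_mul_of_pos_left hT2M habsC)
  have hga : -|g0| ≤ g0 := neg_abs_le g0
  have hgb : g0 ≤ |g0| := le_abs_self g0
  have hprod : (w c / u c) * (w d' / u d') < 0 :=
    sign_lemma C g0 (w c / u c) (w d' / u d') T₁ T₂ heq1 heq2 habs1 habs2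
  have huc : 0 < u c := hupos c hcI
  have hud : 0 < u d' := hupos d' hdI'
  have hww : w c * w d' < 0 := by
    rw [div_mul_div_comm] at hprod
    rcases div_neg_iff.1 hprod with ⟨_, h2⟩ | ⟨h1, _⟩
    · exact absurd h2 (not_lt.2 (mul_pos huc hud).le)
    · exact h1
  have hcd'' : c ≤ d' := (hcx.trans hxd').le
  have hIccsub : Icc c d' ⊆ I := hIcc c hcI d' hdI'
  have hwc : ContinuousOn w (Icc c d') := hwcont.mono hIccsub
  rcases mul_neg_iff.1 hww with ⟨hp1, hn2⟩ | ⟨hn1, hp2⟩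
  · obtain ⟨z, hz, hz0⟩ := intermediate_value_Icc' hcd'' hwc
      (Set.mem_Icc.2 ⟨hn2.le, hp1.le⟩)
    exact ⟨z, hIccsub hz, hz0⟩
  · obtain ⟨z, hz, hz0⟩ := intermediate_value_Icc hcd'' hwc
      (Set.mem_Icc.2 ⟨hn1.le, hp2.le⟩)
    exact ⟨z, hIccsub hz, hz0⟩
end

section
/- If 0 < λ < μ < 1/2, then p_μ(x) > p_λ(x) for all x ∈ (-1,1), where p_λ(x) = 4λ(1-λ)/(1-x²)², and yet the solution v₁(x) = (1-x)^μ (1+x)^{1-μ} of v'' + p_μ v = 0 is strictly positive on (-1,1); hence the conclusion of the classical Sturm comparison theorem fails between the zeros x = -1 and x = 1 of the solution u₁(x) = (1-x)^λ (1+x)^{1-λ} of u'' + p_λ u = 0. -/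
open Set Real

private lemma hd_base {a b : ℝ} {x : ℝ} (h1 : -1 < x) (h2 : x < 1) :
    HasDerivAt (fun y : ℝ => (1 - y) ^ a * (1 + y) ^ b)
      (-(a * (1 - x) ^ (a - 1) * (1 + x) ^ b) + b * (1 - x) ^ a * (1 + x) ^ (b - 1)) x := by
  have hx1 : (0:ℝ) < 1 - x := by linarith
  have hx2 : (0:ℝ) < 1 + x := by linarith
  have hA : HasDerivAt (fun y : ℝ => (1 - y) ^ a) (-(a * (1 - x) ^ (a - 1))) x := by
    have := (Real.hasDerivAt_rpow_const (x := 1 - x) (p := a) (Or.inl hx1.ne')).comp x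
      ((hasDerivAt_id x).const_sub 1)
    simpa [Function.comp_def] using this
  have hB : HasDerivAt (fun y : ℝ => (1 + y) ^ b) (b * (1 + x) ^ (b - 1)) x := by
    have := (Real.hasDerivAt_rpow_const (x := 1 + x) (p := b) (Or.inl hx2.ne')).comp x
      ((hasDerivAt_id x).const_add 1)
    simpa [Function.comp_def] using this
  have := hA.mul hB
  refine this.congr_deriv ?_
  ring

private noncomputable def Gfun (l : ℝ) : ℝ → ℝ := fun y =>
  -(l * (1 - y) ^ (l - 1) * (1 + y) ^ (1 - l)) + (1 - l) * (1 - y) ^ l * (1 + y) ^ (1 - l - 1)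

private lemma hd_first {l : ℝ} {x : ℝ} (h1 : -1 < x) (h2 : x < 1) :
    HasDerivAt (fun y : ℝ => (1 - y) ^ l * (1 + y) ^ (1 - l)) (Gfun l x) x :=
  hd_base h1 h2

private lemma hd_second {l : ℝ} {x : ℝ} (h1 : -1 < x) (h2 : x < 1) :
    HasDerivAt (Gfun l)
      (-(4 * l * (1 - l) / (1 - x ^ 2) ^ 2 * ((1 - x) ^ l * (1 + x) ^ (1 - l)))) x := by
  have hx1 : (0:ℝ) < 1 - x := by linarith
  have hx2 : (0:ℝ) < 1 + x := by linarith
  have hT1 : HasDerivAt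
      (fun y : ℝ => (-l) * ((1 - y) ^ (l - 1) * (1 + y) ^ (1 - l)))
      ((-l) * (-((l - 1) * (1 - x) ^ (l - 1 - 1) * (1 + x) ^ (1 - l)) +
        (1 - l) * (1 - x) ^ (l - 1) * (1 + x) ^ (1 - l - 1))) x :=
    (hd_base h1 h2).const_mul (-l)
  have hT2 : HasDerivAt
      (fun y : ℝ => (1 - l) * ((1 - y) ^ l * (1 + y) ^ (1 - l - 1)))
      ((1 - l) * (-(l * (1 - x) ^ (l - 1) * (1 + x) ^ (1 - l - 1)) +
        (1 - l - 1) * (1 - x) ^ l * (1 + x) ^ (1 - l - 1 - 1))) x :=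
    (hd_base h1 h2).const_mul (1 - l)
  have hsum := hT1.add hT2
  have hfun : Gfun l = fun y : ℝ =>
      (-l) * ((1 - y) ^ (l - 1) * (1 + y) ^ (1 - l)) +
      (1 - l) * ((1 - y) ^ l * (1 + y) ^ (1 - l - 1)) := by
    funext y; simp [Gfun]; ring
  rw [hfun]
  refine hsum.congr_deriv ?_
  have e1 : (1 - x) ^ (l - 1) = (1 - x) ^ l / (1 - x) := by
    rw [Real.rpow_sub hx1, Real.rpow_one]
  have e2 : (1 - x) ^ (l - 1 - 1) = (1 - x) ^ l / (1 - x) / (1 - x) := by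
    rw [Real.rpow_sub hx1 (l - 1) 1, Real.rpow_one, e1]
  have e3 : (1 + x) ^ (1 - l - 1) = (1 + x) ^ (1 - l) / (1 + x) := by
    rw [Real.rpow_sub hx2, Real.rpow_one]
  have e4 : (1 + x) ^ (1 - l - 1 - 1) = (1 + x) ^ (1 - l) / (1 + x) / (1 + x) := by
    rw [Real.rpow_sub hx2 (1 - l - 1) 1, Real.rpow_one, e3]
  rw [e1, e2, e3, e4]
  have hq : (1 : ℝ) - x ^ 2 = (1 - x) * (1 + x) := by ring
  rw [hq]
  field_simp
  ring

/-- For `0 < λ < μ < 1/2`, `p_μ > p_λ` on `(-1,1)`, yet the solution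
`v₁ = (1-x)^μ (1+x)^{1-μ}` of `v'' + p_μ v = 0` is positive on `(-1,1)`:
the classical Sturm comparison conclusion fails between the zeros `±1` of
the solution `u₁ = (1-x)^λ (1+x)^{1-λ}` of `u'' + p_λ u = 0`. -/
theorem sturm_comparison_fails_example (l m : ℝ) (hl0 : 0 < l) (hlm : l < m) (hm : m < 1 / 2)
    (pl pm u₁ v₁ : ℝ → ℝ)
    (hpl : ∀ x, pl x = 4 * l * (1 - l) / (1 - x ^ 2) ^ 2)
    (hpm : ∀ x, pm x = 4 * m * (1 - m) / (1 - x ^ 2) ^ 2)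
    (hu₁ : ∀ x, u₁ x = (1 - x) ^ l * (1 + x) ^ (1 - l))
    (hv₁ : ∀ x, v₁ x = (1 - x) ^ m * (1 + x) ^ (1 - m)) :
    (∀ x ∈ Ioo (-1 : ℝ) 1, pl x < pm x) ∧
    (∀ x ∈ Ioo (-1 : ℝ) 1,
      HasDerivAt u₁ (deriv u₁ x) x ∧ HasDerivAt (deriv u₁) (-(pl x * u₁ x)) x) ∧
    u₁ (-1) = 0 ∧ u₁ 1 = 0 ∧
    (∀ x ∈ Ioo (-1 : ℝ) 1,
      HasDerivAt v₁ (deriv v₁ x) x ∧ HasDerivAt (deriv v₁) (-(pm x * v₁ x)) x) ∧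
    (∀ x ∈ Ioo (-1 : ℝ) 1, 0 < v₁ x) ∧
    ¬ ∃ x ∈ Ioo (-1 : ℝ) 1, v₁ x = 0 := by
  have hu : u₁ = fun y : ℝ => (1 - y) ^ l * (1 + y) ^ (1 - l) := funext hu₁
  have hv : v₁ = fun y : ℝ => (1 - y) ^ m * (1 + y) ^ (1 - m) := funext hv₁
  -- generic ODE claim
  have main : ∀ (c : ℝ) (p w : ℝ → ℝ),
      (∀ x, p x = 4 * c * (1 - c) / (1 - x ^ 2) ^ 2) →
      (w = fun y : ℝ => (1 - y) ^ c * (1 + y) ^ (1 - c)) →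
      ∀ x ∈ Ioo (-1 : ℝ) 1,
        HasDerivAt w (deriv w x) x ∧ HasDerivAt (deriv w) (-(p x * w x)) x := by
    intro c p w hp hw x hx
    obtain ⟨h1, h2⟩ := hx
    have hfst : HasDerivAt w (Gfun c x) x := by rw [hw]; exact hd_first h1 h2
    have hderiv : deriv w x = Gfun c x := hfst.deriv
    refine ⟨hderiv ▸ hfst, ?_⟩
    have hEq : deriv w =ᶠ[nhds x] Gfun c := by
      filter_upwards [isOpen_Ioo.mem_nhds (⟨h1, h2⟩ : x ∈ Ioo (-1:ℝ) 1)] with y hy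
      have : HasDerivAt w (Gfun c y) y := by rw [hw]; exact hd_first hy.1 hy.2
      exact this.deriv
    have hsnd := hd_second (l := c) h1 h2
    have : HasDerivAt (deriv w) (-(4 * c * (1 - c) / (1 - x ^ 2) ^ 2 *
        ((1 - x) ^ c * (1 + x) ^ (1 - c)))) x := hsnd.congr_of_eventuallyEq hEq
    have hwx : w x = (1 - x) ^ c * (1 + x) ^ (1 - c) := by rw [hw]
    rw [hp, hwx]
    exact this
  have hpos : ∀ x ∈ Ioo (-1 : ℝ) 1, 0 < v₁ x := by
    intro x hx
    obtain ⟨h1, h2⟩ := hx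
    rw [hv₁]
    have hx1 : (0:ℝ) < 1 - x := by linarith
    have hx2 : (0:ℝ) < 1 + x := by linarith
    positivity
  refine ⟨?_, main l pl u₁ hpl hu, ?_, ?_, main m pm v₁ hpm hv, hpos, ?_⟩
  · intro x hx
    obtain ⟨h1, h2⟩ := hx
    rw [hpl, hpm]
    have hden : (0:ℝ) < (1 - x ^ 2) ^ 2 := by
      have : (0:ℝ) < 1 - x ^ 2 := by nlinarith
      positivity
    have hnum : 4 * l * (1 - l) < 4 * m * (1 - m) := by nlinarith
    exact (div_lt_div_iff_of_pos_right hden).mpr hnum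
  · rw [hu₁]; norm_num
    exact Or.inr (Real.zero_rpow (by linarith : (0:ℝ) < 1 - l).ne')
  · rw [hu₁]; norm_num
    exact Or.inl (Real.zero_rpow hl0.ne')
  · rintro ⟨x, hx, hx0⟩
    exact absurd hx0 (hpos x hx).ne'
end

section
/- Suppose u is a solution of u'' + p u = 0 and v is a solution of v'' + P v = 0 on (a,b), with initial conditions v(c) = u(c) > 0 and v'(c) = u'(c) at some c ∈ (a,b). If P ≥ p on [c,b) with P ≢ p there, u > 0 on [c,b), and ∫^b dx/u²(x) = ∞, then v has a zero in (c,b). -/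
open MeasureTheory Set

/-- If `v` agrees with `u` to first order at `c`, `P ≥ p` (with `P ≢ p`) and `u > 0` on
`[c,b)`, and `∫^b dx/u² = ∞`, then `v` vanishes somewhere in `(c,b)`. -/
theorem comparison_half_interval (a b : EReal) (hab : a < b)
    (p P u v : ℝ → ℝ) (c : ℝ)
    (I : Set ℝ) (hI : I = {x : ℝ | a < (x : EReal) ∧ (x : EReal) < b})
    (hc : c ∈ I)
    (hp : ContinuousOn p I) (hP : ContinuousOn P I)
    (hu : ∀ x ∈ I, HasDerivAt u (deriv u x) x ∧ HasDerivAt (deriv u) (-(p x * u x)) x)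
    (hv : ∀ x ∈ I, HasDerivAt v (deriv v x) x ∧ HasDerivAt (deriv v) (-(P x * v x)) x)
    (hvc : v c = u c) (hucpos : 0 < u c) (hvc' : deriv v c = deriv u c)
    (hPp : ∀ x ∈ I ∩ Ici c, p x ≤ P x) (hne : ∃ x ∈ I ∩ Ici c, P x ≠ p x)
    (hupos : ∀ x ∈ I ∩ Ici c, 0 < u x)
    (hdivb : ∫⁻ x in I ∩ Ioi c, ENNReal.ofReal (1 / (u x) ^ 2) = ⊤) :
    ∃ x ∈ I, c < x ∧ v x = 0 := by
  -- basic structure of I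
  have hIopen : IsOpen I := by
    rw [hI]
    exact (isOpen_Ioo (a := a) (b := b)).preimage continuous_coe_real_ereal
  have hIcc : ∀ {x y : ℝ}, x ∈ I → y ∈ I → Icc x y ⊆ I := by
    intro x y hx hy z hz
    rw [hI] at hx hy ⊢
    exact ⟨lt_of_lt_of_le hx.1 (EReal.coe_le_coe_iff.2 hz.1),
      lt_of_le_of_lt (EReal.coe_le_coe_iff.2 hz.2) hy.2⟩
  by_contra hcon
  push_neg at hcon
  -- v is positive on I ∩ Ici c
  have hvpos : ∀ x ∈ I ∩ Ici c, 0 < v x := by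
    intro x ⟨hxI, hxc⟩
    by_contra h
    push_neg at h
    have hsub : Icc c x ⊆ I := hIcc hc hxI
    have hcont : ContinuousOn v (Icc c x) := fun z hz =>
      ((hv z (hsub hz)).1.continuousAt).continuousWithinAt
    have h0 : (0 : ℝ) ∈ Icc (v x) (v c) := ⟨h, by rw [hvc]; exact hucpos.le⟩
    obtain ⟨z, hz, hz0⟩ := intermediate_value_Icc' hxc hcont h0
    have hzc : c < z := by
      rcases eq_or_lt_of_le hz.1 with h' | h'
      · exfalso; rw [← h'] at hz0; rw [hvc] at hz0; linarith
      · exact h'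
    exact hcon z (hsub hz) hzc hz0
  -- the Wronskian
  set W : ℝ → ℝ := fun x => deriv u x * v x - u x * deriv v x with hWdef
  have hWd : ∀ x ∈ I, HasDerivAt W ((P x - p x) * (u x * v x)) x := by
    intro x hx
    have h1 := ((hu x hx).2.mul (hv x hx).1).sub ((hu x hx).1.mul (hv x hx).2)
    refine h1.congr_deriv ?_
    ring
  have hWc : W c = 0 := by simp only [hWdef, hvc, hvc']; ring
  have hWmono : ∀ x ∈ I ∩ Ici c, ∀ y ∈ I ∩ Ici c, x ≤ y → W x ≤ W y := by
    intro x hx y hy hxy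
    have hsub : Icc x y ⊆ I := hIcc hx.1 hy.1
    have hmono : MonotoneOn W (Icc x y) := by
      apply monotoneOn_of_deriv_nonneg (convex_Icc x y)
      · exact fun z hz => ((hWd z (hsub hz)).continuousAt).continuousWithinAt
      · intro z hz
        rw [interior_Icc] at hz
        exact ((hWd z (hsub (Ioo_subset_Icc_self hz))).differentiableAt).differentiableWithinAt
      · intro z hz
        rw [interior_Icc] at hz
        have hzI : z ∈ I := hsub (Ioo_subset_Icc_self hz)
        have hzc : z ∈ I ∩ Ici c := ⟨hzI, le_trans hx.2 hz.1.le⟩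
        rw [(hWd z hzI).deriv]
        exact mul_nonneg (sub_nonneg.2 (hPp z hzc))
          (mul_nonneg (hupos z hzc).le (hvpos z hzc).le)
    exact hmono ⟨le_refl x, hxy⟩ ⟨hxy, le_refl y⟩ hxy
  have hWnonneg : ∀ x ∈ I ∩ Ici c, 0 ≤ W x := by
    intro x hx
    rw [← hWc]
    exact hWmono c ⟨hc, le_refl c⟩ x hx hx.2
  -- find x₀ > c with W x₀ > 0
  obtain ⟨x₀, hx₀I, hx₀c, hwpos⟩ : ∃ x₀ ∈ I, c < x₀ ∧ 0 < W x₀ := by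
    obtain ⟨x₁, hx₁, hne1⟩ := hne
    have hlt : p x₁ < P x₁ := (hPp x₁ hx₁).lt_of_ne (Ne.symm hne1)
    have hqcont : ContinuousAt (fun x => P x - p x) x₁ :=
      (hP.continuousAt (hIopen.mem_nhds hx₁.1)).sub (hp.continuousAt (hIopen.mem_nhds hx₁.1))
    have hnhds : {x | x ∈ I ∧ 0 < P x - p x} ∈ nhds x₁ := by
      have h1 : I ∈ nhds x₁ := hIopen.mem_nhds hx₁.1
      have h2 : (fun x => P x - p x) ⁻¹' Ioi 0 ∈ nhds x₁ :=
        hqcont (Ioi_mem_nhds (by simp only; linarith))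
      filter_upwards [h1, h2] with x hx1 hx2 using ⟨hx1, hx2⟩
    obtain ⟨ε, hε, hball⟩ := Metric.mem_nhds_iff.1 hnhds
    set x₀ := x₁ + ε / 2 with hx₀def
    have hIccball : Icc x₁ x₀ ⊆ {x | x ∈ I ∧ 0 < P x - p x} := by
      intro z hz
      apply hball
      rw [Metric.mem_ball, Real.dist_eq, abs_lt]
      constructor <;> [skip; skip] <;>
        simp only [hx₀def] at hz ⊢ <;> cases hz with | intro h1 h2 => linarith
    have hsubI : Icc x₁ x₀ ⊆ I := fun z hz => (hIccball hz).1
    have hstrict : StrictMonoOn W (Icc x₁ x₀) := by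
      apply strictMonoOn_of_deriv_pos (convex_Icc x₁ x₀)
      · exact fun z hz => ((hWd z (hsubI hz)).continuousAt).continuousWithinAt
      · intro z hz
        rw [interior_Icc] at hz
        have hzI : z ∈ I := hsubI (Ioo_subset_Icc_self hz)
        have hzc : z ∈ I ∩ Ici c := ⟨hzI, le_trans hx₁.2 hz.1.le⟩
        rw [(hWd z hzI).deriv]
        exact mul_pos (hIccball (Ioo_subset_Icc_self hz)).2
          (mul_pos (hupos z hzc) (hvpos z hzc))
    have hx₁x₀ : x₁ < x₀ := by simp only [hx₀def]; linarith
    have hx₀I : x₀ ∈ I := hsubI ⟨hx₁x₀.le, le_refl _⟩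
    refine ⟨x₀, hx₀I, lt_of_le_of_lt hx₁.2 hx₁x₀, ?_⟩
    have h1 : W x₁ < W x₀ := hstrict ⟨le_refl _, hx₁x₀.le⟩ ⟨hx₁x₀.le, le_refl _⟩ hx₁x₀
    have h2 : 0 ≤ W x₁ := hWnonneg x₁ hx₁
    linarith
  set w := W x₀ with hwdef
  have hx₀c' : x₀ ∈ I ∩ Ici c := ⟨hx₀I, hx₀c.le⟩
  -- continuity of the integrand
  set f : ℝ → ℝ := fun t => 1 / u t ^ 2 with hfdef
  have hfnonneg : ∀ t, 0 ≤ f t := fun t => div_nonneg zero_le_one (sq_nonneg _)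
  have hfcont : ContinuousOn f (I ∩ Ici c) := by
    intro z hz
    have := ((hu z hz.1).1.continuousAt)
    exact (continuousOn_const.div (ContinuousOn.pow (fun y hy =>
      ((hu y hy.1).1.continuousAt).continuousWithinAt) 2)
      (fun y hy => pow_ne_zero 2 (hupos y hy).ne')) z hz
  have hIccsub : ∀ {s t : ℝ}, s ∈ I ∩ Ici c → t ∈ I ∩ Ici c → Icc s t ⊆ I ∩ Ici c := by
    intro s t hs ht z hz
    exact ⟨hIcc hs.1 ht.1 hz, le_trans hs.2 hz.1⟩
  have hfint : ∀ {s t : ℝ}, s ∈ I ∩ Ici c → t ∈ I ∩ Ici c →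
      IntervalIntegrable f volume s t := by
    intro s t hs ht
    apply ContinuousOn.intervalIntegrable
    apply hfcont.mono
    rcases le_total s t with h | h
    · rw [uIcc_of_le h]; exact hIccsub hs ht
    · rw [uIcc_of_ge h]; exact hIccsub ht hs
  -- key bound for the integral from x₀
  have key : ∀ X ∈ I, x₀ ≤ X → ∫ t in x₀..X, f t ≤ (v x₀ / u x₀) / w := by
    intro X hXI hX
    have hXc : X ∈ I ∩ Ici c := ⟨hXI, le_trans hx₀c.le hX⟩
    set F : ℝ → ℝ := fun x => v x / u x + w * ∫ t in x₀..x, f t with hFdef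
    have hU : IsOpen (I ∩ Ioi c) := hIopen.inter isOpen_Ioi
    have hfcontU : ContinuousOn f (I ∩ Ioi c) :=
      hfcont.mono (inter_subset_inter_right _ Ioi_subset_Ici_self)
    have hFd : ∀ x ∈ I ∩ Ici x₀, HasDerivAt F
        ((deriv v x * u x - v x * deriv u x) / u x ^ 2 + w * (1 / u x ^ 2)) x := by
      intro x hx
      have hxI : x ∈ I := hx.1
      have hxc : x ∈ I ∩ Ici c := ⟨hxI, le_trans hx₀c.le hx.2⟩
      have hxU : x ∈ I ∩ Ioi c := ⟨hxI, lt_of_lt_of_le hx₀c hx.2⟩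
      have h1 : HasDerivAt (fun x => v x / u x)
          ((deriv v x * u x - v x * deriv u x) / u x ^ 2) x :=
        (hv x hxI).1.div (hu x hxI).1 (hupos x hxc).ne'
      have h2 : HasDerivAt (fun y => ∫ t in x₀..y, f t) (f x) x := by
        apply intervalIntegral.integral_hasDerivAt_right (hfint hx₀c' hxc)
        · exact hfcontU.stronglyMeasurableAtFilter hU x hxU
        · have hcu : ContinuousAt u x := (hu x hxI).1.continuousAt
          exact (continuousAt_const.div (hcu.pow 2) (pow_ne_zero 2 (hupos x hxc).ne'))
      exact h1.add (h2.const_mul w)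
    have hanti : AntitoneOn F (Icc x₀ X) := by
      apply antitoneOn_of_deriv_nonpos (convex_Icc x₀ X)
      · intro z hz
        have hzm : z ∈ I ∩ Ici x₀ := ⟨hIcc hx₀I hXI hz, hz.1⟩
        exact ((hFd z hzm).continuousAt).continuousWithinAt
      · intro z hz
        rw [interior_Icc] at hz
        have hzm : z ∈ I ∩ Ici x₀ := ⟨hIcc hx₀I hXI (Ioo_subset_Icc_self hz), hz.1.le⟩
        exact ((hFd z hzm).differentiableAt).differentiableWithinAt
      · intro z hz
        rw [interior_Icc] at hz
        have hzm : z ∈ I ∩ Ici x₀ := ⟨hIcc hx₀I hXI (Ioo_subset_Icc_self hz), hz.1.le⟩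
        have hzc : z ∈ I ∩ Ici c := ⟨hzm.1, le_trans hx₀c.le hzm.2⟩
        rw [(hFd z hzm).deriv]
        have hWz : w ≤ W z := hWmono x₀ hx₀c' z hzc hzm.2
        have heq : (deriv v z * u z - v z * deriv u z) / u z ^ 2 + w * (1 / u z ^ 2)
            = (w - W z) / u z ^ 2 := by
          simp only [hWdef]
          ring
        rw [heq]
        exact div_nonpos_of_nonpos_of_nonneg (by linarith) (sq_nonneg _)
    have hFX : F X ≤ F x₀ := hanti ⟨le_refl _, hX⟩ ⟨hX, le_refl _⟩ hX
    have hFx₀ : F x₀ = v x₀ / u x₀ := by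
      simp [hFdef, intervalIntegral.integral_same]
    have hvX : 0 < v X / u X := div_pos (hvpos X hXc) (hupos X hXc)
    rw [hFx₀] at hFX
    simp only [hFdef] at hFX
    rw [le_div_iff₀ hwpos]
    linarith
  -- uniform bound for the integral from c
  set M := (v x₀ / u x₀) / w with hMdef
  have hMnonneg : 0 ≤ M :=
    div_nonneg (div_nonneg (hvpos x₀ hx₀c').le (hupos x₀ hx₀c').le) hwpos.le
  set C := (∫ t in c..x₀, f t) + M with hCdef
  have bound : ∀ x ∈ I, c ≤ x → ∫ t in c..x, f t ≤ C := by
    intro x hxI hxc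
    have hxm : x ∈ I ∩ Ici c := ⟨hxI, hxc⟩
    have hcm : c ∈ I ∩ Ici c := ⟨hc, le_refl c⟩
    rcases le_total x x₀ with h | h
    · have hadd : (∫ t in c..x, f t) + ∫ t in x..x₀, f t = ∫ t in c..x₀, f t :=
        intervalIntegral.integral_add_adjacent_intervals (hfint hcm hxm) (hfint hxm hx₀c')
      have hnn : 0 ≤ ∫ t in x..x₀, f t :=
        intervalIntegral.integral_nonneg h (fun t _ => hfnonneg t)
      simp only [hCdef]
      linarith
    · have hadd : (∫ t in c..x₀, f t) + ∫ t in x₀..x, f t = ∫ t in c..x, f t :=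
        intervalIntegral.integral_add_adjacent_intervals (hfint hcm hx₀c') (hfint hx₀c' hxm)
      have hk := key x hxI h
      simp only [hCdef, hMdef]
      linarith
  -- now derive a contradiction with the divergent integral
  -- construct an exhausting sequence
  obtain ⟨d, hdI, hdc, hdmono, hdcover⟩ : ∃ d : ℕ → ℝ, (∀ n, d n ∈ I) ∧ (∀ n, c ≤ d n) ∧
      Monotone d ∧ ∀ x ∈ I ∩ Ioi c, ∃ n, x ≤ d n := by
    have hcI := hc
    rw [hI] at hcI
    induction b with
    | bot => exact absurd hcI.2 (not_lt_bot)
    | coe β =>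
      have hcβ : c < β := EReal.coe_lt_coe_iff.1 hcI.2
      refine ⟨fun n => β - (β - c) / (n + 1), ?_, ?_, ?_, ?_⟩
      · intro n
        rw [hI]
        have h1 : (β - c) / (n + 1) ≤ β - c := by
          apply div_le_self (by linarith)
          have : (0:ℝ) ≤ n := Nat.cast_nonneg n
          linarith
        have h2 : 0 < (β - c) / (n + 1) := by
          apply div_pos (by linarith)
          have : (0:ℝ) ≤ n := Nat.cast_nonneg n
          linarith
        constructor
        · calc a < (c : EReal) := hcI.1
            _ ≤ _ := EReal.coe_le_coe_iff.2 (by linarith)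
        · exact EReal.coe_lt_coe_iff.2 (by linarith)
      · intro n
        have h1 : (β - c) / (n + 1) ≤ β - c := by
          apply div_le_self (by linarith)
          have : (0:ℝ) ≤ n := Nat.cast_nonneg n
          linarith
        linarith
      · intro m n hmn
        have h1 : (β - c) / (n + 1) ≤ (β - c) / (m + 1) := by
          apply div_le_div_of_nonneg_left (by linarith) (by positivity)
          exact_mod_cast by omega
        simp only
        linarith
      · intro x hx
        have hxI := hx.1
        rw [hI] at hxI
        have hxβ : x < β := EReal.coe_lt_coe_iff.1 hxI.2
        obtain ⟨n, hn⟩ := exists_nat_ge ((β - c) / (β - x))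
        refine ⟨n, ?_⟩
        have hβx : 0 < β - x := by linarith
        have h1 : (β - c) / (n + 1) ≤ β - x := by
          rw [div_le_iff₀ (by positivity)]
          have h2 : (β - c) / (β - x) ≤ n + 1 := by linarith
          calc β - c = (β - c) / (β - x) * (β - x) := by field_simp
            _ ≤ (n + 1) * (β - x) := by
                apply mul_le_mul_of_nonneg_right h2 hβx.le
            _ = (β - x) * (n + 1) := by ring
        linarith
    | top =>
      refine ⟨fun n => c + n, ?_, ?_, ?_, ?_⟩
      · intro n
        rw [hI]
        constructor
        · calc a < (c : EReal) := hcI.1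
            _ ≤ _ := EReal.coe_le_coe_iff.2 (by
              show c ≤ c + (n : ℝ)
              linarith [Nat.cast_nonneg (α := ℝ) n])
        · exact lt_top_iff_ne_top.2 (EReal.coe_ne_top _)
      · intro n; show c ≤ c + (n : ℝ); linarith [Nat.cast_nonneg (α := ℝ) n]
      · intro m n hmn
        simp only [add_le_add_iff_left, Nat.cast_le]
        exact hmn
      · intro x hx
        obtain ⟨n, hn⟩ := exists_nat_ge (x - c)
        exact ⟨n, by show x ≤ c + (n : ℝ); linarith⟩
  -- measurable structure
  set S := I ∩ Ioi c with hSdef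
  have hSmeas : MeasurableSet S := hIopen.measurableSet.inter measurableSet_Ioi
  set g : ℝ → ENNReal := fun x => ENNReal.ofReal (f x) with hgdef
  have hgmeas : AEMeasurable g (volume.restrict S) := by
    have : ContinuousOn g S := by
      apply ENNReal.continuous_ofReal.comp_continuousOn
      exact hfcont.mono (inter_subset_inter_right _ Ioi_subset_Ici_self)
    exact this.aemeasurable hSmeas
  have hIocsub : ∀ n, Ioc c (d n) ⊆ S := by
    intro n z hz
    exact ⟨hIcc hc (hdI n) ⟨hz.1.le, hz.2⟩, hz.1⟩
  -- monotone convergence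
  have hmc : ∫⁻ x in S, g x = ⨆ n, ∫⁻ x in Ioc c (d n), g x := by
    have h1 : ∀ n, AEMeasurable ((Ioc c (d n)).indicator g) (volume.restrict S) :=
      fun n => hgmeas.indicator measurableSet_Ioc
    have h2 : ∀ᵐ x ∂(volume.restrict S), Monotone fun n => (Ioc c (d n)).indicator g x := by
      apply ae_of_all
      intro x m n hmn
      exact indicator_le_indicator_of_subset (Ioc_subset_Ioc_right (hdmono hmn))
        (fun _ => zero_le) x
    have h3 := lintegral_iSup' h1 h2
    have h4 : ∫⁻ x in S, (⨆ n, (Ioc c (d n)).indicator g x) = ∫⁻ x in S, g x := by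
      apply lintegral_congr_ae
      filter_upwards [ae_restrict_mem hSmeas] with x hx
      obtain ⟨n, hn⟩ := hdcover x hx
      apply le_antisymm
      · exact iSup_le fun n => indicator_apply_le (fun _ => le_refl _)
      · refine le_trans ?_ (le_iSup _ n)
        rw [indicator_of_mem (Set.mem_Ioc.2 ⟨hx.2, hn⟩)]
    rw [← h4, h3]
    congr 1
    ext n
    rw [lintegral_indicator measurableSet_Ioc, Measure.restrict_restrict measurableSet_Ioc,
      inter_eq_left.2 (hIocsub n)]
  -- each piece is bounded by C
  have hbdd : ∀ n, ∫⁻ x in Ioc c (d n), g x ≤ ENNReal.ofReal C := by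
    intro n
    have hdm : d n ∈ I ∩ Ici c := ⟨hdI n, hdc n⟩
    have hcm : c ∈ I ∩ Ici c := ⟨hc, le_refl c⟩
    have hint : IntegrableOn f (Ioc c (d n)) volume :=
      (intervalIntegrable_iff_integrableOn_Ioc_of_le (hdc n)).1 (hfint hcm hdm)
    have heq : ∫⁻ x in Ioc c (d n), g x = ENNReal.ofReal (∫ x in Ioc c (d n), f x) := by
      rw [← ofReal_integral_eq_lintegral_ofReal hint (ae_of_all _ (fun t => hfnonneg t))]
    rw [heq]
    apply ENNReal.ofReal_le_ofReal
    rw [← intervalIntegral.integral_of_le (hdc n)]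
    exact bound (d n) (hdI n) (hdc n)
  have hfinal : ∫⁻ x in S, ENNReal.ofReal (1 / u x ^ 2) ≤ ENNReal.ofReal C := by
    calc ∫⁻ x in S, ENNReal.ofReal (1 / u x ^ 2) = ∫⁻ x in S, g x := rfl
      _ = ⨆ n, ∫⁻ x in Ioc c (d n), g x := hmc
      _ ≤ ENNReal.ofReal C := iSup_le hbdd
  rw [hdivb] at hfinal
  exact ENNReal.ofReal_ne_top (top_le_iff.1 hfinal)
end

section
/- If u₁ and u₂ are two positive solutions of u'' + p u = 0 on an interval, α ∈ (0,1), and W = u₁ u₂' - u₁' u₂ is their (constant) Wronskian, then v = u₁^α u₂^{1-α} satisfies v'' + [p(x) + α(1-α) W² / (u₁² u₂²)] v = 0. -/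
open Set

/-- If `u₁, u₂ > 0` solve `u'' + p u = 0` with constant Wronskian `W`, then
`v = u₁^α u₂^{1-α}` satisfies `v'' + (p + α(1-α) W²/(u₁² u₂²)) v = 0`. -/
theorem power_mean_of_solutions (a b : ℝ) (p u₁ u₂ : ℝ → ℝ) (α W : ℝ)
    (hα : α ∈ Ioo (0 : ℝ) 1)
    (hu₁ : ∀ x ∈ Ioo a b, HasDerivAt u₁ (deriv u₁ x) x ∧
      HasDerivAt (deriv u₁) (-(p x * u₁ x)) x)
    (hu₂ : ∀ x ∈ Ioo a b, HasDerivAt u₂ (deriv u₂ x) x ∧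
      HasDerivAt (deriv u₂) (-(p x * u₂ x)) x)
    (h₁ : ∀ x ∈ Ioo a b, 0 < u₁ x) (h₂ : ∀ x ∈ Ioo a b, 0 < u₂ x)
    (hW : ∀ x ∈ Ioo a b, u₁ x * deriv u₂ x - deriv u₁ x * u₂ x = W)
    (v : ℝ → ℝ) (hv : ∀ x, v x = u₁ x ^ α * u₂ x ^ (1 - α)) :
    ∀ x ∈ Ioo a b, HasDerivAt v (deriv v x) x ∧
      HasDerivAt (deriv v)
        (-((p x + α * (1 - α) * W ^ 2 / ((u₁ x) ^ 2 * (u₂ x) ^ 2)) * v x)) x := by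
  have hvF : v = fun x => u₁ x ^ α * u₂ x ^ (1 - α) := funext hv
  set g : ℝ → ℝ := fun x =>
    deriv u₁ x * α * u₁ x ^ (α - 1) * u₂ x ^ (1 - α) +
      u₁ x ^ α * (deriv u₂ x * (1 - α) * u₂ x ^ (1 - α - 1)) with hg
  have key : ∀ x ∈ Ioo a b, HasDerivAt v (g x) x := by
    intro x hx
    rw [hvF]
    have h1 := ((hu₁ x hx).1.rpow_const (p := α) (Or.inl (h₁ x hx).ne'))
    have h2 := ((hu₂ x hx).1.rpow_const (p := 1 - α) (Or.inl (h₂ x hx).ne'))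
    have : HasDerivAt (fun y => u₁ y ^ α * u₂ y ^ (1 - α)) _ x := h1.mul h2
    convert this using 1
  have hdg : ∀ x ∈ Ioo a b, deriv v x = g x := fun x hx => (key x hx).deriv
  intro x hx
  have hvd : HasDerivAt v (deriv v x) x := by rw [hdg x hx]; exact key x hx
  refine ⟨hvd, ?_⟩
  have a1 : (0:ℝ) < u₁ x := h₁ x hx
  have a2 : (0:ℝ) < u₂ x := h₂ x hx
  -- derivative of g at x
  have hg1 := (hu₁ x hx).1.rpow_const (p := α) (Or.inl a1.ne')
  have hg1' := (hu₁ x hx).1.rpow_const (p := α - 1) (Or.inl a1.ne')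
  have hg2 := (hu₂ x hx).1.rpow_const (p := 1 - α) (Or.inl a2.ne')
  have hg2' := (hu₂ x hx).1.rpow_const (p := 1 - α - 1) (Or.inl a2.ne')
  have hG : HasDerivAt g
      (((-(p x * u₁ x)) * α * u₁ x ^ (α - 1) +
          deriv u₁ x * α * (deriv u₁ x * (α - 1) * u₁ x ^ (α - 1 - 1))) * u₂ x ^ (1 - α) +
        deriv u₁ x * α * u₁ x ^ (α - 1) * (deriv u₂ x * (1 - α) * u₂ x ^ (1 - α - 1)) +
        ((deriv u₁ x * α * u₁ x ^ (α - 1)) * (deriv u₂ x * (1 - α) * u₂ x ^ (1 - α - 1)) +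
          u₁ x ^ α * ((-(p x * u₂ x)) * (1 - α) * u₂ x ^ (1 - α - 1) +
            deriv u₂ x * (1 - α) * (deriv u₂ x * (1 - α - 1) * u₂ x ^ (1 - α - 1 - 1))))) x := by
    exact ((((hu₁ x hx).2.mul_const α).mul hg1').mul hg2).add
      (hg1.mul (((hu₂ x hx).2.mul_const (1 - α)).mul hg2'))
  have hgv : HasDerivAt (deriv v) _ x :=
    hG.congr_of_eventuallyEq <|
      Filter.eventuallyEq_of_mem (isOpen_Ioo.mem_nhds hx) hdg
  convert hgv using 1
  rw [hv x, ← hW x hx]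
  have e1 : u₁ x ^ (α - 1) = u₁ x ^ α / u₁ x := by
    rw [Real.rpow_sub a1, Real.rpow_one]
  have e2 : u₁ x ^ (α - 1 - 1) = u₁ x ^ α / (u₁ x ^ 2) := by
    rw [show α - 1 - 1 = α - (2:ℝ) by ring, Real.rpow_sub a1, Real.rpow_two]
  have e3 : u₂ x ^ (1 - α - 1) = u₂ x ^ (1 - α) / u₂ x := by
    rw [Real.rpow_sub a2, Real.rpow_one]
  have e4 : u₂ x ^ (1 - α - 1 - 1) = u₂ x ^ (1 - α) / (u₂ x ^ 2) := by
    rw [show 1 - α - 1 - 1 = (1 - α) - (2:ℝ) by ring, Real.rpow_sub a2, Real.rpow_two]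
  rw [e1, e2, e3, e4]
  field_simp
  ring
end

section
/- Let u > 0 be a solution of u'' + p u = 0 on (a,b) such that both L₁ = ∫_a^{x₀} dt/u² and L₂ = ∫_{x₀}^b dt/u² are finite. Define f(x) = ∫_{x₀}^x dt/u² and P(x) = p(x) + (π²/(L₁+L₂)²) f'(x)². Then P(x) > p(x) on (a,b) and the equation v'' + P v = 0 has a solution that is positive on (a,b). -/
open MeasureTheory Set intervalIntegral Real

/-- If both boundary integrals `L₁, L₂` of `1/u²` are finite, then
`P = p + (π²/(L₁+L₂)²) f'²` satisfies `P > p` and `v'' + P v = 0` has a positive solution. -/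
theorem comparison_fails_both_finite (a b : EReal) (hab : a < b)
    (p u : ℝ → ℝ) (x₀ L₁ L₂ : ℝ)
    (I : Set ℝ) (hI : I = {x : ℝ | a < (x : EReal) ∧ (x : EReal) < b})
    (hx₀ : x₀ ∈ I)
    (hp : ContinuousOn p I)
    (hu : ∀ x ∈ I, HasDerivAt u (deriv u x) x ∧ HasDerivAt (deriv u) (-(p x * u x)) x)
    (hupos : ∀ x ∈ I, 0 < u x)
    (hL₁ : ∫⁻ x in I ∩ Iio x₀, ENNReal.ofReal (1 / (u x) ^ 2) = ENNReal.ofReal L₁)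
    (hL₂ : ∫⁻ x in I ∩ Ioi x₀, ENNReal.ofReal (1 / (u x) ^ 2) = ENNReal.ofReal L₂)
    (f P : ℝ → ℝ)
    (hf : ∀ x, f x = ∫ t in x₀..x, 1 / (u t) ^ 2)
    (hPdef : ∀ x, P x = p x + π ^ 2 / (L₁ + L₂) ^ 2 * (deriv f x) ^ 2) :
    (∀ x ∈ I, p x < P x) ∧
    ∃ v : ℝ → ℝ,
      (∀ x ∈ I, HasDerivAt v (deriv v x) x ∧ HasDerivAt (deriv v) (-(P x * v x)) x) ∧
      ∀ x ∈ I, 0 < v x := by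
  -- basic facts about I
  have hIopen : IsOpen I := by
    rw [hI]
    exact (isOpen_Ioo (a := a) (b := b)).preimage continuous_coe_real_ereal
  have hIord : ∀ c ∈ I, ∀ d ∈ I, ∀ y : ℝ, c ≤ y → y ≤ d → y ∈ I := by
    intro c hc d hd y hcy hyd
    rw [hI] at hc hd ⊢
    exact ⟨lt_of_lt_of_le hc.1 (EReal.coe_le_coe_iff.mpr hcy),
      lt_of_le_of_lt (EReal.coe_le_coe_iff.mpr hyd) hd.2⟩
  have hImeas : MeasurableSet I := hIopen.measurableSet
  -- the integrand q
  set q : ℝ → ℝ := fun t => 1 / (u t) ^ 2 with hqdef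
  have hucont : ContinuousOn u I := fun x hx => ((hu x hx).1.continuousAt).continuousWithinAt
  have hqc : ContinuousOn q I :=
    continuousOn_const.div (hucont.pow 2) (fun x hx => pow_ne_zero 2 (hupos x hx).ne')
  have hqnn : ∀ t, 0 ≤ q t := fun t => by positivity
  have hqpos : ∀ x ∈ I, 0 < q x := fun x hx =>
    div_pos one_pos (pow_pos (hupos x hx) 2)
  -- balls inside I
  have hball : ∀ x ∈ I, ∃ ε > 0, Ioo (x - ε) (x + ε) ⊆ I := by
    intro x hx
    rcases Metric.isOpen_iff.mp hIopen x hx with ⟨ε, hε, hsub⟩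
    exact ⟨ε, hε, by rw [← Real.ball_eq_Ioo]; exact hsub⟩
  -- positivity of lintegrals on nonnull subsets of I
  have helperA : ∀ s : Set ℝ, MeasurableSet s → s ⊆ I → volume s ≠ 0 →
      0 < ∫⁻ t in s, ENNReal.ofReal (q t) := by
    intro s hms hsub hvs
    rw [pos_iff_ne_zero]
    intro h0
    have hqm : AEMeasurable (fun t => ENNReal.ofReal (q t)) (volume.restrict s) :=
      ((hqc.mono hsub).aemeasurable hms).ennreal_ofReal
    rw [lintegral_eq_zero_iff' hqm] at h0
    have h1 := (ae_restrict_iff' hms).mp h0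
    rw [ae_iff] at h1
    apply hvs
    refine measure_mono_null (fun x hx => ?_) h1
    simp only [mem_setOf_eq, Classical.not_imp]
    exact ⟨hx, (ENNReal.ofReal_pos.mpr (hqpos x (hsub hx))).ne'⟩
  -- value of the interval integral as a lintegral
  have helperB : ∀ c d : ℝ, c ∈ I → d ∈ I → c ≤ d →
      (∫ t in c..d, q t) = (∫⁻ t in Ioc c d, ENNReal.ofReal (q t)).toReal := by
    intro c d hc hd hcd
    have hsub : Ioc c d ⊆ I := fun y hy => hIord c hc d hd y (le_of_lt hy.1) hy.2
    rw [intervalIntegral.integral_of_le hcd,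
      MeasureTheory.integral_eq_lintegral_of_nonneg_ae
        (Filter.Eventually.of_forall fun t => hqnn t)
        ((hqc.mono hsub).aestronglyMeasurable measurableSet_Ioc)]
  -- L₂ > 0
  have hL2pos : 0 < L₂ := by
    rcases hball x₀ hx₀ with ⟨ε, hε, hsub⟩
    have hs : volume (I ∩ Ioi x₀) ≠ 0 := by
      have h1 : Ioo x₀ (x₀ + ε) ⊆ I ∩ Ioi x₀ := fun y hy =>
        ⟨hsub ⟨by linarith [hy.1], hy.2⟩, hy.1⟩
      have h2 : (0 : ENNReal) < volume (Ioo x₀ (x₀ + ε)) := by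
        rw [Real.volume_Ioo]
        simp [ENNReal.ofReal_pos]; linarith
      exact ((h2.trans_le (measure_mono h1))).ne'
    have := helperA _ (hImeas.inter measurableSet_Ioi) inter_subset_left hs
    rw [hL₂] at this
    exact ENNReal.ofReal_pos.mp this
  -- L₁ > 0
  have hL1pos : 0 < L₁ := by
    rcases hball x₀ hx₀ with ⟨ε, hε, hsub⟩
    have hs : volume (I ∩ Iio x₀) ≠ 0 := by
      have h1 : Ioo (x₀ - ε) x₀ ⊆ I ∩ Iio x₀ := fun y hy =>
        ⟨hsub ⟨hy.1, by linarith [hy.2]⟩, hy.2⟩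
      have h2 : (0 : ENNReal) < volume (Ioo (x₀ - ε) x₀) := by
        rw [Real.volume_Ioo]
        simp [ENNReal.ofReal_pos]; linarith
      exact ((h2.trans_le (measure_mono h1))).ne'
    have := helperA _ (hImeas.inter measurableSet_Iio) inter_subset_left hs
    rw [hL₁] at this
    exact ENNReal.ofReal_pos.mp this
  have hLpos : 0 < L₁ + L₂ := by linarith
  -- f x < L₂ on I
  have hfub : ∀ x ∈ I, f x < L₂ := by
    intro x hx
    rcases le_or_gt x x₀ with hle | hlt
    · have : f x ≤ 0 := by
        rw [hf x, intervalIntegral.integral_symm, neg_nonpos]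
        exact intervalIntegral.integral_nonneg hle (fun t _ => hqnn t)
      linarith
    · -- split I ∩ Ioi x₀ = Ioc x₀ x ∪ (I ∩ Ioi x)
      have hsplit : I ∩ Ioi x₀ = Ioc x₀ x ∪ (I ∩ Ioi x) := by
        ext y
        constructor
        · rintro ⟨hyI, hy0⟩
          rcases le_or_gt y x with h | h
          · exact Or.inl ⟨hy0, h⟩
          · exact Or.inr ⟨hyI, h⟩
        · rintro (⟨h1, h2⟩ | ⟨h1, h2⟩)
          · exact ⟨hIord x₀ hx₀ x hx y (le_of_lt h1) h2, h1⟩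
          · exact ⟨h1, lt_trans hlt h2⟩
      have hdisj : Disjoint (Ioc x₀ x) (I ∩ Ioi x) := by
        refine Set.disjoint_left.mpr fun y hy1 hy2 => ?_
        exact absurd hy2.2 (not_lt.mpr hy1.2)
      have heq : ENNReal.ofReal L₂ =
          (∫⁻ t in Ioc x₀ x, ENNReal.ofReal (q t)) + ∫⁻ t in I ∩ Ioi x, ENNReal.ofReal (q t) := by
        rw [← hL₂, hsplit, lintegral_union (hImeas.inter measurableSet_Ioi) hdisj]
      -- positivity of the tail piece
      rcases hball x hx with ⟨ε, hε, hsub⟩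
      have htail : 0 < ∫⁻ t in I ∩ Ioi x, ENNReal.ofReal (q t) := by
        refine helperA _ (hImeas.inter measurableSet_Ioi) inter_subset_left ?_
        have h1 : Ioo x (x + ε) ⊆ I ∩ Ioi x := fun y hy =>
          ⟨hsub ⟨by linarith [hy.1], hy.2⟩, hy.1⟩
        have h2 : (0 : ENNReal) < volume (Ioo x (x + ε)) := by
          rw [Real.volume_Ioo]; simp [ENNReal.ofReal_pos]; linarith
        exact ((h2.trans_le (measure_mono h1))).ne'
      have hAne : (∫⁻ t in Ioc x₀ x, ENNReal.ofReal (q t)) ≠ ⊤ := by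
        intro h
        rw [h] at heq
        simp at heq
      have hAlt : (∫⁻ t in Ioc x₀ x, ENNReal.ofReal (q t)) < ENNReal.ofReal L₂ := by
        rw [heq]
        exact ENNReal.lt_add_right hAne htail.ne'
      have : f x = (∫⁻ t in Ioc x₀ x, ENNReal.ofReal (q t)).toReal := by
        rw [hf x]; exact helperB x₀ x hx₀ hx (le_of_lt hlt)
      rw [this, ← ENNReal.toReal_ofReal hL2pos.le]
      exact ENNReal.toReal_strict_mono ENNReal.ofReal_ne_top hAlt
  -- -L₁ < f x on I
  have hflb : ∀ x ∈ I, -L₁ < f x := by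
    intro x hx
    rcases le_or_gt x₀ x with hle | hlt
    · have : 0 ≤ f x := by
        rw [hf x]
        exact intervalIntegral.integral_nonneg hle (fun t _ => hqnn t)
      linarith
    · have hsplit : I ∩ Iio x₀ = (I ∩ Iio x) ∪ Ico x x₀ := by
        ext y
        constructor
        · rintro ⟨hyI, hy0⟩
          rcases lt_or_ge y x with h | h
          · exact Or.inl ⟨hyI, h⟩
          · exact Or.inr ⟨h, hy0⟩
        · rintro (⟨h1, h2⟩ | ⟨h1, h2⟩)
          · exact ⟨h1, lt_trans h2 hlt⟩
          · exact ⟨hIord x hx x₀ hx₀ y h1 (le_of_lt h2), h2⟩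
      have hdisj : Disjoint (I ∩ Iio x) (Ico x x₀) := by
        refine Set.disjoint_left.mpr fun y hy1 hy2 => ?_
        exact absurd hy2.1 (not_le.mpr hy1.2)
      have hIco : (∫⁻ t in Ico x x₀, ENNReal.ofReal (q t)) =
          ∫⁻ t in Ioc x x₀, ENNReal.ofReal (q t) :=
        setLIntegral_congr Ico_ae_eq_Ioc
      have heq : ENNReal.ofReal L₁ =
          (∫⁻ t in I ∩ Iio x, ENNReal.ofReal (q t)) + ∫⁻ t in Ioc x x₀, ENNReal.ofReal (q t) := by
        rw [← hL₁, hsplit, lintegral_union measurableSet_Ico hdisj, hIco]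
      rcases hball x hx with ⟨ε, hε, hsub⟩
      have htail : 0 < ∫⁻ t in I ∩ Iio x, ENNReal.ofReal (q t) := by
        refine helperA _ (hImeas.inter measurableSet_Iio) inter_subset_left ?_
        have h1 : Ioo (x - ε) x ⊆ I ∩ Iio x := fun y hy =>
          ⟨hsub ⟨hy.1, by linarith [hy.2]⟩, hy.2⟩
        have h2 : (0 : ENNReal) < volume (Ioo (x - ε) x) := by
          rw [Real.volume_Ioo]; simp [ENNReal.ofReal_pos]; linarith
        exact ((h2.trans_le (measure_mono h1))).ne'
      have hAne : (∫⁻ t in Ioc x x₀, ENNReal.ofReal (q t)) ≠ ⊤ := by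
        intro h
        rw [h] at heq
        simp at heq
      have hAlt : (∫⁻ t in Ioc x x₀, ENNReal.ofReal (q t)) < ENNReal.ofReal L₁ := by
        rw [heq, add_comm]
        exact ENNReal.lt_add_right hAne htail.ne'
      have hfval : f x = -(∫⁻ t in Ioc x x₀, ENNReal.ofReal (q t)).toReal := by
        rw [hf x, intervalIntegral.integral_symm, helperB x x₀ hx hx₀ (le_of_lt hlt)]
      rw [hfval, neg_lt_neg_iff, ← ENNReal.toReal_ofReal hL1pos.le]
      exact ENNReal.toReal_strict_mono ENNReal.ofReal_ne_top hAlt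
  -- derivative of f
  have hfd : ∀ x ∈ I, HasDerivAt f (q x) x := by
    intro x hx
    have hfeq : f = fun y => ∫ t in x₀..y, q t := funext hf
    rw [hfeq]
    have hsub : uIcc x₀ x ⊆ I := by
      intro y hy
      rcases le_total x₀ x with h | h
      · rw [uIcc_of_le h] at hy; exact hIord x₀ hx₀ x hx y hy.1 hy.2
      · rw [uIcc_of_ge h] at hy; exact hIord x hx x₀ hx₀ y hy.1 hy.2
    exact intervalIntegral.integral_hasDerivAt_right
      ((hqc.mono hsub).intervalIntegrable)
      (hqc.stronglyMeasurableAtFilter hIopen x hx)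
      (hqc.continuousAt (hIopen.mem_nhds hx))
  constructor
  · -- P > p
    intro x hx
    rw [hPdef x, lt_add_iff_pos_right]
    have hdf : deriv f x = q x := (hfd x hx).deriv
    rw [hdf]
    have h1 : 0 < π ^ 2 / (L₁ + L₂) ^ 2 := div_pos (pow_pos pi_pos 2) (pow_pos hLpos 2)
    exact mul_pos h1 (pow_pos (hqpos x hx) 2)
  -- the positive solution
  set L : ℝ := L₁ + L₂ with hLdef
  set v : ℝ → ℝ := fun x => u x * Real.sin (π * (f x + L₁) / L) with hvdef
  set w : ℝ → ℝ := fun x => deriv u x * Real.sin (π * (f x + L₁) / L)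
    + (π / L) * Real.cos (π * (f x + L₁) / L) / u x with hwdef
  have hθ : ∀ x ∈ I, HasDerivAt (fun y => π * (f y + L₁) / L) (π * q x / L) x := by
    intro x hx
    exact (((hfd x hx).add_const L₁).const_mul π).div_const L
  have hvd : ∀ x ∈ I, HasDerivAt v
      (deriv u x * Real.sin (π * (f x + L₁) / L)
        + u x * (Real.cos (π * (f x + L₁) / L) * (π * q x / L))) x := by
    intro x hx
    exact (hu x hx).1.mul ((hθ x hx).sin)
  have hdvw : ∀ x ∈ I, deriv v x = w x := by
    intro x hx
    rw [(hvd x hx).deriv, hwdef]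
    have hune : u x ≠ 0 := (hupos x hx).ne'
    simp only [hqdef]
    field_simp
  refine ⟨v, fun x hx => ⟨?_, ?_⟩, fun x hx => ?_⟩
  · exact ((hvd x hx).deriv) ▸ (hvd x hx)
  · -- second derivative
    have hune : u x ≠ 0 := (hupos x hx).ne'
    have hLne : L ≠ 0 := hLpos.ne'
    have hw1 : HasDerivAt (fun y => deriv u y * Real.sin (π * (f y + L₁) / L))
        (-(p x * u x) * Real.sin (π * (f x + L₁) / L)
          + deriv u x * (Real.cos (π * (f x + L₁) / L) * (π * q x / L))) x :=
      (hu x hx).2.mul ((hθ x hx).sin)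
    have hcos : HasDerivAt (fun y => Real.cos (π * (f y + L₁) / L))
        (-Real.sin (π * (f x + L₁) / L) * (π * q x / L)) x :=
      (hθ x hx).cos
    have hN : HasDerivAt (fun y => (π / L) * Real.cos (π * (f y + L₁) / L))
        ((π / L) * (-Real.sin (π * (f x + L₁) / L) * (π * q x / L))) x := hcos.const_mul (π / L)
    have hw2 : HasDerivAt (fun y => (π / L) * Real.cos (π * (f y + L₁) / L) / u y)
        (((π / L) * (-Real.sin (π * (f x + L₁) / L) * (π * q x / L)) * u x
          - (π / L) * Real.cos (π * (f x + L₁) / L) * deriv u x) / (u x) ^ 2) x :=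
      hN.div (hu x hx).1 hune
    have hw : HasDerivAt w
        ((-(p x * u x) * Real.sin (π * (f x + L₁) / L)
          + deriv u x * (Real.cos (π * (f x + L₁) / L) * (π * q x / L)))
        + ((π / L) * (-Real.sin (π * (f x + L₁) / L) * (π * q x / L)) * u x
          - (π / L) * Real.cos (π * (f x + L₁) / L) * deriv u x) / (u x) ^ 2) x :=
      hw1.add hw2
    have hEq : deriv v =ᶠ[nhds x] w :=
      Filter.eventuallyEq_of_mem (hIopen.mem_nhds hx) hdvw
    have hdv : HasDerivAt (deriv v)
        ((-(p x * u x) * Real.sin (π * (f x + L₁) / L)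
          + deriv u x * (Real.cos (π * (f x + L₁) / L) * (π * q x / L)))
        + ((π / L) * (-Real.sin (π * (f x + L₁) / L) * (π * q x / L)) * u x
          - (π / L) * Real.cos (π * (f x + L₁) / L) * deriv u x) / (u x) ^ 2) x :=
      hw.congr_of_eventuallyEq hEq
    convert hdv using 1
    rw [hPdef x, (hfd x hx).deriv, hvdef]
    simp only [hqdef]
    have h2 : (u x) ^ 2 ≠ 0 := pow_ne_zero 2 hune
    field_simp
    ring
  · -- positivity
    have h1 : 0 < π * (f x + L₁) / L := by
      have := hflb x hx
      have : 0 < f x + L₁ := by linarith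
      positivity
    have h2 : π * (f x + L₁) / L < π := by
      rw [div_lt_iff₀ hLpos]
      have := hfub x hx
      nlinarith [pi_pos]
    exact mul_pos (hupos x hx) (Real.sin_pos_of_pos_of_lt_pi h1 h2)
end

section
/- Let u > 0 be a positive solution of u'' + p u = 0 on (a,b) with L₁ = ∫_a^{x₀} dt/u² < ∞ but L₂ = ∫_{x₀}^b dt/u² = ∞. Let f(x) = ∫_{x₀}^x dt/u² and P(x) = p(x) + f'(x)²/(4(f(x)+L₁)²). Then P > p on (a,b) and v'' + P v = 0 admits a solution positive on all of (a,b). -/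
open MeasureTheory Set intervalIntegral

/-- If `L₁ = ∫_a^{x₀} dt/u² < ∞` while `∫_{x₀}^b dt/u² = ∞`, then
`P = p + f'²/(4(f+L₁)²)` satisfies `P > p` and `v'' + P v = 0` has a positive solution. -/
theorem comparison_fails_one_finite (a b : EReal) (hab : a < b)
    (p u : ℝ → ℝ) (x₀ L₁ : ℝ)
    (I : Set ℝ) (hI : I = {x : ℝ | a < (x : EReal) ∧ (x : EReal) < b})
    (hx₀ : x₀ ∈ I)
    (hp : ContinuousOn p I)
    (hu : ∀ x ∈ I, HasDerivAt u (deriv u x) x ∧ HasDerivAt (deriv u) (-(p x * u x)) x)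
    (hupos : ∀ x ∈ I, 0 < u x)
    (hL₁ : ∫⁻ x in I ∩ Iio x₀, ENNReal.ofReal (1 / (u x) ^ 2) = ENNReal.ofReal L₁)
    (hL₂ : ∫⁻ x in I ∩ Ioi x₀, ENNReal.ofReal (1 / (u x) ^ 2) = ⊤)
    (f P : ℝ → ℝ)
    (hf : ∀ x, f x = ∫ t in x₀..x, 1 / (u t) ^ 2)
    (hPdef : ∀ x, P x = p x + (deriv f x) ^ 2 / (4 * (f x + L₁) ^ 2)) :
    (∀ x ∈ I, p x < P x) ∧
    ∃ v : ℝ → ℝ,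
      (∀ x ∈ I, HasDerivAt v (deriv v x) x ∧ HasDerivAt (deriv v) (-(P x * v x)) x) ∧
      ∀ x ∈ I, 0 < v x := by
  subst hI
  set I : Set ℝ := {x : ℝ | a < (x : EReal) ∧ (x : EReal) < b} with hIdef
  set g : ℝ → ℝ := fun t => 1 / (u t) ^ 2 with hg
  -- I is open
  have hIopen : IsOpen I := by
    have : I = Real.toEReal ⁻¹' (Ioo a b) := rfl
    rw [this]
    exact isOpen_Ioo.preimage continuous_coe_real_ereal
  -- I is "order connected"
  have hsub : ∀ {c d : ℝ}, c ∈ I → d ∈ I → uIcc c d ⊆ I := by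
    intro c d hc hd t ht
    rw [mem_uIcc] at ht
    constructor
    · rcases ht with ⟨h1, _⟩ | ⟨h1, _⟩
      · exact lt_of_lt_of_le hc.1 (EReal.coe_le_coe_iff.mpr h1)
      · exact lt_of_lt_of_le hd.1 (EReal.coe_le_coe_iff.mpr h1)
    · rcases ht with ⟨_, h2⟩ | ⟨_, h2⟩
      · exact lt_of_le_of_lt (EReal.coe_le_coe_iff.mpr h2) hd.2
      · exact lt_of_le_of_lt (EReal.coe_le_coe_iff.mpr h2) hc.2
  -- continuity facts
  have hucont : ContinuousOn u I := fun x hx =>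
    ((hu x hx).1.continuousAt).continuousWithinAt
  have hgcont : ContinuousOn g I := by
    apply continuousOn_const.div (hucont.pow 2)
    intro x hx
    exact pow_ne_zero 2 (hupos x hx).ne'
  have hgnonneg : ∀ t, 0 ≤ g t := fun t => by positivity
  have hgpos : ∀ x ∈ I, 0 < g x := fun x hx =>
    one_div_pos.mpr (pow_pos (hupos x hx) 2)
  -- interval integrability
  have hint : ∀ c d, c ∈ I → d ∈ I → IntervalIntegrable g volume c d := fun c d hc hd =>
    (hgcont.mono (hsub hc hd)).intervalIntegrable
  -- derivative of f
  have hfd : ∀ x ∈ I, HasDerivAt f (g x) x := by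
    intro x hx
    have hfe : f = fun y => ∫ t in x₀..y, g t := funext hf
    rw [hfe]
    exact integral_hasDerivAt_right (hint x₀ x hx₀ hx)
      (hgcont.stronglyMeasurableAtFilter hIopen x hx)
      (hgcont.continuousAt (hIopen.mem_nhds hx))
  have hderivf : ∀ x ∈ I, deriv f x = g x := fun x hx => (hfd x hx).deriv
  -- the key positivity fact : f x + L₁ > 0 on I
  have key : ∀ x ∈ I, 0 < f x + L₁ := by
    intro x hx
    -- pick y ∈ I with y < x and y < x₀
    have hmin : a < ((min x x₀ : ℝ) : EReal) := by
      rcases le_total x x₀ with h | h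
      · rw [min_eq_left h]; exact hx.1
      · rw [min_eq_right h]; exact hx₀.1
    obtain ⟨y, hay, hym⟩ := EReal.lt_iff_exists_real_btwn.mp hmin
    have hym' : y < min x x₀ := EReal.coe_lt_coe_iff.mp hym
    have hyx : y < x := lt_of_lt_of_le hym' (min_le_left _ _)
    have hyx₀ : y < x₀ := lt_of_lt_of_le hym' (min_le_right _ _)
    have hyI : y ∈ I := ⟨hay, lt_trans (lt_of_lt_of_le hym
      (EReal.coe_le_coe_iff.mpr (min_le_left _ _))) hx.2⟩
    -- A := ∫_y^{x₀} g ≤ L₁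
    set A : ℝ := ∫ t in y..x₀, g t with hA
    have hApos : 0 < A := intervalIntegral_pos_of_pos_on (hint y x₀ hyI hx₀)
      (fun t ht => hgpos t (hsub hyI hx₀ (by
        rw [uIcc_of_le hyx₀.le]; exact Ioo_subset_Icc_self ht))) hyx₀
    have hIoosub : Ioo y x₀ ⊆ I ∩ Iio x₀ := by
      intro t ht
      refine ⟨hsub hyI hx₀ ?_, ht.2⟩
      rw [uIcc_of_le hyx₀.le]
      exact Ioo_subset_Icc_self ht
    have hIntOn : IntegrableOn g (Ioo y x₀) volume :=
      ((hint y x₀ hyI hx₀).1).mono_set Ioo_subset_Ioc_self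
    have e1 : ENNReal.ofReal A = ∫⁻ t in Ioo y x₀, ENNReal.ofReal (g t) := by
      rw [hA, integral_of_le hyx₀.le, integral_Ioc_eq_integral_Ioo]
      exact ofReal_integral_eq_lintegral_ofReal hIntOn
        (Filter.Eventually.of_forall hgnonneg)
    have e2 : ENNReal.ofReal A ≤ ENNReal.ofReal L₁ := by
      rw [e1, ← hL₁]
      exact lintegral_mono_set hIoosub
    have hAL : A ≤ L₁ := by
      rcases ENNReal.ofReal_le_ofReal_iff'.mp e2 with h | h
      · exact h
      · linarith
    -- f x + A = ∫_y^x g > 0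
    have hsum : A + f x = ∫ t in y..x, g t := by
      rw [hf x]
      exact integral_add_adjacent_intervals (hint y x₀ hyI hx₀) (hint x₀ x hx₀ hx)
    have hpos2 : 0 < ∫ t in y..x, g t := intervalIntegral_pos_of_pos_on
      (hint y x hyI hx) (fun t ht => hgpos t (hsub hyI hx (by
        rw [uIcc_of_le hyx.le]; exact Ioo_subset_Icc_self ht))) hyx
    linarith
  -- part 1 : p < P on I
  have part1 : ∀ x ∈ I, p x < P x := by
    intro x hx
    rw [hPdef x, hderivf x hx]
    have h1 : 0 < (g x) ^ 2 / (4 * (f x + L₁) ^ 2) := by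
      apply div_pos (pow_pos (hgpos x hx) 2)
      have := key x hx
      positivity
    linarith
  refine ⟨part1, ?_⟩
  -- the solution v = u * sqrt (f + L₁)
  set s : ℝ → ℝ := fun x => Real.sqrt (f x + L₁) with hs
  set v : ℝ → ℝ := fun x => u x * s x with hv
  have hspos : ∀ x ∈ I, 0 < s x := fun x hx => Real.sqrt_pos.mpr (key x hx)
  have hvpos : ∀ x ∈ I, 0 < v x := fun x hx => mul_pos (hupos x hx) (hspos x hx)
  have hs2 : ∀ x ∈ I, s x ^ 2 = f x + L₁ := fun x hx => Real.sq_sqrt (key x hx).le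
  -- derivative of s
  have hsd : ∀ x ∈ I, HasDerivAt s (1 / (2 * s x) * g x) x := by
    intro x hx
    have h1 : HasDerivAt (fun y => f y + L₁) (g x) x := (hfd x hx).add_const L₁
    have h2 := (Real.hasDerivAt_sqrt (key x hx).ne').comp x h1
    exact h2
  -- derivative of v
  set V : ℝ → ℝ := fun x => deriv u x * s x + (2 * (u x * s x))⁻¹ with hV
  have hvd : ∀ x ∈ I, HasDerivAt v (V x) x := by
    intro x hx
    have h1 : HasDerivAt v (deriv u x * s x + u x * (1 / (2 * s x) * g x)) x :=
      (hu x hx).1.mul (hsd x hx)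
    convert h1 using 1
    have hu0 : u x ≠ 0 := (hupos x hx).ne'
    have hs0 : s x ≠ 0 := (hspos x hx).ne'
    simp only [hV, hg]
    field_simp
  have hderivv : ∀ x ∈ I, deriv v x = V x := fun x hx => (hvd x hx).deriv
  -- second derivative
  have hVd : ∀ x ∈ I, HasDerivAt V (-(P x * v x)) x := by
    intro x hx
    have hu0 : u x ≠ 0 := (hupos x hx).ne'
    have hs0 : s x ≠ 0 := (hspos x hx).ne'
    have hv0 : (2 : ℝ) * (u x * s x) ≠ 0 := by
      have := hvpos x hx
      simp only [hv] at this
      positivity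
    have hA : HasDerivAt (fun y => deriv u y * s y)
        (-(p x * u x) * s x + deriv u x * (1 / (2 * s x) * g x)) x :=
      (hu x hx).2.mul (hsd x hx)
    have hw : HasDerivAt (fun y => 2 * (u y * s y))
        (2 * (deriv u x * s x + u x * (1 / (2 * s x) * g x))) x :=
      ((hu x hx).1.mul (hsd x hx)).const_mul 2
    have hB : HasDerivAt (fun y => (2 * (u y * s y))⁻¹)
        (-(2 * (deriv u x * s x + u x * (1 / (2 * s x) * g x))) / (2 * (u x * s x)) ^ 2) x :=
      hw.inv hv0
    have htot := hA.add hB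
    convert htot using 1
    case e'_4 => rfl
    case e'_5 => rfl
    case e'_8 => rfl
    rw [hPdef x, hderivf x hx]
    have hfl : f x + L₁ = s x ^ 2 := (hs2 x hx).symm
    rw [hfl]
    simp only [hv, hg]
    field_simp
    ring
  refine ⟨v, fun x hx => ⟨(hderivv x hx) ▸ hvd x hx, ?_⟩, hvpos⟩
  have heq : deriv v =ᶠ[nhds x] V :=
    Filter.eventuallyEq_of_mem (hIopen.mem_nhds hx) (fun y hy => hderivv y hy)
  exact (hVd x hx).congr_of_eventuallyEq heq
end

section
/- Let u > 0 be a solution of u'' + p u = 0 on (a,b) such that at least one of L₁ = ∫_a^{x₀} dt/u² and L₂ = ∫_{x₀}^b dt/u² is finite. Then there is a solution of the same equation, linearly independent of u, that has no zero in (a,b); i.e., the Sturm separation theorem fails. -/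
open MeasureTheory Set


lemma seg_lintegral {I : Set ℝ} {g : ℝ → ℝ} (hg : ContinuousOn g I)
    (hgnn : ∀ t ∈ I, 0 ≤ g t) {x y : ℝ} (hxy : x ≤ y) (hsub : Icc x y ⊆ I) :
    ∫⁻ t in Ioc x y, ENNReal.ofReal (g t) = ENNReal.ofReal (∫ t in x..y, g t) := by
  rw [intervalIntegral.integral_of_le hxy]
  refine (ofReal_integral_eq_lintegral_ofReal ?_ ?_).symm
  · exact ((hg.mono hsub).integrableOn_Icc).mono_set Ioc_subset_Icc_self
  · exact (ae_restrict_iff' measurableSet_Ioc).2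
      (ae_of_all _ fun t ht => hgnn t (hsub (Ioc_subset_Icc_self ht)))

lemma seg_pos {I : Set ℝ} {g : ℝ → ℝ} (hg : ContinuousOn g I)
    (hgpos : ∀ t ∈ I, 0 < g t) {x y : ℝ} (hxy : x < y) (hsub : Icc x y ⊆ I) :
    0 < ∫ t in x..y, g t := by
  refine intervalIntegral.intervalIntegral_pos_of_pos_on ?_ ?_ hxy
  · exact (hg.mono (by rwa [uIcc_of_le hxy.le])).intervalIntegrable
  · exact fun t ht => hgpos t (hsub (Ioo_subset_Icc_self ht))

lemma addL {I : Set ℝ} (hIc : I.OrdConnected) {g : ℝ → ℝ} (hg : ContinuousOn g I)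
    (hgnn : ∀ t ∈ I, 0 ≤ g t) {x y : ℝ} (hx : x ∈ I) (hy : y ∈ I) (hxy : x ≤ y) :
    ∫⁻ t in I ∩ Iio y, ENNReal.ofReal (g t)
      = (∫⁻ t in I ∩ Iio x, ENNReal.ofReal (g t)) + ENNReal.ofReal (∫ t in x..y, g t) := by
  have hsub : Icc x y ⊆ I := hIc.out hx hy
  have hset : I ∩ Iio y = (I ∩ Iio x) ∪ Ico x y := by
    ext t
    simp only [mem_inter_iff, mem_Iio, mem_union, mem_Ico]
    constructor
    · rintro ⟨htI, hty⟩
      by_cases h : t < x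
      exacts [Or.inl ⟨htI, h⟩, Or.inr ⟨not_lt.1 h, hty⟩]
    · rintro (⟨htI, htx⟩ | ⟨hxt, hty⟩)
      exacts [⟨htI, htx.trans_le hxy⟩, ⟨hsub ⟨hxt, hty.le⟩, hty⟩]
  have hdisj : Disjoint (I ∩ Iio x) (Ico x y) :=
    Set.disjoint_left.2 fun t ht ht' => absurd ht.2 (not_lt.2 ht'.1)
  rw [hset, lintegral_union measurableSet_Ico hdisj,
    Measure.restrict_congr_set Ico_ae_eq_Ioc, seg_lintegral hg hgnn hxy hsub]

lemma addR {I : Set ℝ} (hIc : I.OrdConnected) (hIm : MeasurableSet I) {g : ℝ → ℝ}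
    (hg : ContinuousOn g I)
    (hgnn : ∀ t ∈ I, 0 ≤ g t) {x y : ℝ} (hx : x ∈ I) (hy : y ∈ I) (hxy : x ≤ y) :
    ∫⁻ t in I ∩ Ioi x, ENNReal.ofReal (g t)
      = ENNReal.ofReal (∫ t in x..y, g t) + (∫⁻ t in I ∩ Ioi y, ENNReal.ofReal (g t)) := by
  have hsub : Icc x y ⊆ I := hIc.out hx hy
  have hset : I ∩ Ioi x = Ioc x y ∪ (I ∩ Ioi y) := by
    ext t
    simp only [mem_inter_iff, mem_Ioi, mem_union, mem_Ioc]
    constructor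
    · rintro ⟨htI, hxt⟩
      by_cases h : t ≤ y
      exacts [Or.inl ⟨hxt, h⟩, Or.inr ⟨htI, not_le.1 h⟩]
    · rintro (⟨hxt, hty⟩ | ⟨htI, hyt⟩)
      exacts [⟨hsub ⟨hxt.le, hty⟩, hxt⟩, ⟨htI, hxy.trans_lt hyt⟩]
  have hdisj : Disjoint (Ioc x y) (I ∩ Ioi y) :=
    Set.disjoint_left.2 fun t ht ht' => absurd ht.2 (not_le.2 ht'.2)
  rw [hset, lintegral_union (hIm.inter measurableSet_Ioi) hdisj,
    seg_lintegral hg hgnn hxy hsub]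

/-- If one of the boundary integrals of `1/u²` is finite, then the Sturm separation theorem
fails: there is a solution, linearly independent of `u`, with no zero in `(a,b)`. -/
theorem separation_fails (a b : EReal) (hab : a < b)
    (p u : ℝ → ℝ) (x₀ : ℝ)
    (I : Set ℝ) (hI : I = {x : ℝ | a < (x : EReal) ∧ (x : EReal) < b})
    (hx₀ : x₀ ∈ I)
    (hp : ContinuousOn p I)
    (hu : ∀ x ∈ I, HasDerivAt u (deriv u x) x ∧ HasDerivAt (deriv u) (-(p x * u x)) x)
    (hupos : ∀ x ∈ I, 0 < u x)
    (hfin : (∫⁻ x in I ∩ Iio x₀, ENNReal.ofReal (1 / (u x) ^ 2)) ≠ ⊤ ∨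
      (∫⁻ x in I ∩ Ioi x₀, ENNReal.ofReal (1 / (u x) ^ 2)) ≠ ⊤) :
    ∃ w : ℝ → ℝ,
      (∀ x ∈ I, HasDerivAt w (deriv w x) x ∧ HasDerivAt (deriv w) (-(p x * w x)) x) ∧
      (∃ x ∈ I, u x * deriv w x - deriv u x * w x ≠ 0) ∧
      ∀ x ∈ I, w x ≠ 0 := by
  have hIopen : IsOpen I := by
    rw [hI]
    exact (isOpen_Ioo (a := a) (b := b)).preimage continuous_coe_real_ereal
  have hIconn : I.OrdConnected := by
    rw [hI]
    refine ⟨fun x hx y hy z hz => ⟨?_, ?_⟩⟩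
    · exact lt_of_lt_of_le hx.1 (EReal.coe_le_coe_iff.2 hz.1)
    · exact lt_of_le_of_lt (EReal.coe_le_coe_iff.2 hz.2) hy.2
  have hIm : MeasurableSet I := hIopen.measurableSet
  set g : ℝ → ℝ := fun t => 1 / (u t) ^ 2 with hgdef
  have hune : ∀ x ∈ I, u x ≠ 0 := fun x hx => (hupos x hx).ne'
  have hucont : ContinuousOn u I := fun x hx => ((hu x hx).1).continuousAt.continuousWithinAt
  have hgcont : ContinuousOn g I :=
    ContinuousOn.div continuousOn_const (hucont.pow 2)
      (fun x hx => pow_ne_zero 2 (hune x hx))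
  have hgpos : ∀ t ∈ I, 0 < g t := fun t ht => div_pos one_pos (pow_pos (hupos t ht) 2)
  have hgnn : ∀ t ∈ I, 0 ≤ g t := fun t ht => (hgpos t ht).le
  set F : ℝ → ℝ := fun x => ∫ t in x₀..x, g t with hFdef
  have hF : ∀ x ∈ I, HasDerivAt F (g x) x := by
    intro x hx
    have hsub : uIcc x₀ x ⊆ I := hIconn.uIcc_subset hx₀ hx
    refine intervalIntegral.integral_hasDerivAt_right
      ((hgcont.mono hsub).intervalIntegrable) ?_ ?_
    · exact hgcont.stronglyMeasurableAtFilter hIopen x hx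
    · exact hgcont.continuousAt (hIopen.mem_nhds hx)
  have hlt : ∀ x ∈ I, ∃ z ∈ I, z < x := by
    intro x hx
    obtain ⟨ε, hε, hball⟩ := Metric.isOpen_iff.1 hIopen x hx
    refine ⟨x - ε / 2, hball ?_, by linarith⟩
    rw [Metric.mem_ball, Real.dist_eq, show x - ε / 2 - x = -(ε / 2) by ring, abs_neg,
      abs_of_pos (by linarith)]
    linarith
  have hgt : ∀ x ∈ I, ∃ z ∈ I, x < z := by
    intro x hx
    obtain ⟨ε, hε, hball⟩ := Metric.isOpen_iff.1 hIopen x hx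
    refine ⟨x + ε / 2, hball ?_, by linarith⟩
    rw [Metric.mem_ball, Real.dist_eq, show x + ε / 2 - x = ε / 2 by ring,
      abs_of_pos (by linarith)]
    linarith
  obtain ⟨c, hc⟩ : ∃ c : ℝ, ∀ x ∈ I, c + F x ≠ 0 := by
    rcases hfin with hfin | hfin
    · set J : ℝ → ENNReal := fun x => ∫⁻ t in I ∩ Iio x, ENNReal.ofReal (g t) with hJ
      have hfinJ : J x₀ ≠ ⊤ := hfin
      refine ⟨(J x₀).toReal, fun x hx => ?_⟩
      have hJpos : ∀ y ∈ I, 0 < J y := by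
        intro y hy
        obtain ⟨z, hz, hzy⟩ := hlt y hy
        have hsub : Icc z y ⊆ I := hIconn.out hz hy
        calc (0 : ENNReal) < ENNReal.ofReal (∫ t in z..y, g t) :=
              ENNReal.ofReal_pos.2 (seg_pos hgcont hgpos hzy hsub)
          _ = ∫⁻ t in Ioc z y, ENNReal.ofReal (g t) :=
              (seg_lintegral hgcont hgnn hzy.le hsub).symm
          _ = ∫⁻ t in Ico z y, ENNReal.ofReal (g t) := by
              rw [Measure.restrict_congr_set Ico_ae_eq_Ioc]
          _ ≤ J y := lintegral_mono_set (fun t ht => ⟨hsub ⟨ht.1, ht.2.le⟩, ht.2⟩)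
      rcases le_or_gt x x₀ with hxx | hxx
      · have hEq : J x₀ = J x + ENNReal.ofReal (∫ t in x..x₀, g t) :=
          addL hIconn hgcont hgnn hx hx₀ hxx
        have hJxne : J x ≠ ⊤ := by
          intro h
          rw [h, top_add] at hEq
          exact hfinJ hEq
        have hnn : 0 ≤ ∫ t in x..x₀, g t :=
          intervalIntegral.integral_nonneg hxx (fun t ht => hgnn t (hIconn.out hx hx₀ ht))
        have hFx : F x = -(∫ t in x..x₀, g t) := intervalIntegral.integral_symm x x₀
        have htr : (J x₀).toReal = (J x).toReal + ∫ t in x..x₀, g t := by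
          rw [hEq, ENNReal.toReal_add hJxne ENNReal.ofReal_ne_top, ENNReal.toReal_ofReal hnn]
        have hpos : 0 < (J x).toReal := ENNReal.toReal_pos (hJpos x hx).ne' hJxne
        refine ne_of_gt ?_
        rw [hFx]
        linarith
      · have hnnF : 0 ≤ F x :=
          intervalIntegral.integral_nonneg hxx.le (fun t ht => hgnn t (hIconn.out hx₀ hx ht))
        have hpos : 0 < (J x₀).toReal := ENNReal.toReal_pos (hJpos x₀ hx₀).ne' hfinJ
        refine ne_of_gt ?_
        linarith
    · set K : ℝ → ENNReal := fun x => ∫⁻ t in I ∩ Ioi x, ENNReal.ofReal (g t) with hK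
      have hfinK : K x₀ ≠ ⊤ := hfin
      refine ⟨-(K x₀).toReal, fun x hx => ?_⟩
      have hKpos : ∀ y ∈ I, 0 < K y := by
        intro y hy
        obtain ⟨z, hz, hyz⟩ := hgt y hy
        have hsub : Icc y z ⊆ I := hIconn.out hy hz
        calc (0 : ENNReal) < ENNReal.ofReal (∫ t in y..z, g t) :=
              ENNReal.ofReal_pos.2 (seg_pos hgcont hgpos hyz hsub)
          _ = ∫⁻ t in Ioc y z, ENNReal.ofReal (g t) :=
              (seg_lintegral hgcont hgnn hyz.le hsub).symm
          _ ≤ K y := lintegral_mono_set (fun t ht => ⟨hsub ⟨ht.1.le, ht.2⟩, ht.1⟩)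
      rcases le_or_gt x₀ x with hxx | hxx
      · have hEq : K x₀ = ENNReal.ofReal (∫ t in x₀..x, g t) + K x :=
          addR hIconn hIm hgcont hgnn hx₀ hx hxx
        have hKxne : K x ≠ ⊤ := by
          intro h
          rw [h, add_top] at hEq
          exact hfinK hEq
        have hnn : 0 ≤ F x :=
          intervalIntegral.integral_nonneg hxx (fun t ht => hgnn t (hIconn.out hx₀ hx ht))
        have htr : (K x₀).toReal = F x + (K x).toReal := by
          rw [hEq, ENNReal.toReal_add ENNReal.ofReal_ne_top hKxne, ENNReal.toReal_ofReal hnn]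
        have hpos : 0 < (K x).toReal := ENNReal.toReal_pos (hKpos x hx).ne' hKxne
        refine ne_of_lt ?_
        linarith
      · have hnn : 0 ≤ ∫ t in x..x₀, g t :=
          intervalIntegral.integral_nonneg hxx.le (fun t ht => hgnn t (hIconn.out hx hx₀ ht))
        have hFx : F x = -(∫ t in x..x₀, g t) := intervalIntegral.integral_symm x x₀
        have hpos : 0 < (K x₀).toReal := ENNReal.toReal_pos (hKpos x₀ hx₀).ne' hfinK
        refine ne_of_lt ?_
        rw [hFx]
        linarith
  have hw1 : ∀ x ∈ I, HasDerivAt (fun t => u t * (c + F t))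
      (deriv u x * (c + F x) + u x * g x) x := by
    intro x hx
    have h := (hu x hx).1.mul ((hasDerivAt_const x c).add (hF x hx))
    exact h.congr_deriv (by simp)
  have hderivw : ∀ x ∈ I, deriv (fun t => u t * (c + F t)) x
      = deriv u x * (c + F x) + u x * g x := fun x hx => (hw1 x hx).deriv
  refine ⟨fun t => u t * (c + F t), fun x hx => ⟨?_, ?_⟩, ⟨x₀, hx₀, ?_⟩,
    fun x hx => mul_ne_zero (hune x hx) (hc x hx)⟩
  · rw [hderivw x hx]
    exact hw1 x hx
  · have hg' : HasDerivAt g (-(2 * deriv u x) / u x ^ 3) x := by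
      have h := (hasDerivAt_const x (1 : ℝ)).div ((hu x hx).1.pow 2)
        (pow_ne_zero 2 (hune x hx))
      refine h.congr_deriv ?_
      simp only [Pi.pow_apply]
      have hux := hune x hx
      field_simp
      ring
    have hw1' : HasDerivAt (fun t => deriv u t * (c + F t) + u t * g t)
        (-(p x * (u x * (c + F x)))) x := by
      have h := ((hu x hx).2.mul ((hasDerivAt_const x c).add (hF x hx))).add
        ((hu x hx).1.mul hg')
      refine h.congr_deriv ?_
      have hux := hune x hx
      simp only [hgdef, Pi.add_apply]
      field_simp
      ring
    have hev : deriv (fun t => u t * (c + F t)) =ᶠ[nhds x]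
        (fun t => deriv u t * (c + F t) + u t * g t) := by
      filter_upwards [hIopen.mem_nhds hx] with t ht
      exact hderivw t ht
    exact hw1'.congr_of_eventuallyEq hev
  · rw [hderivw x₀ hx₀]
    have hux := hune x₀ hx₀
    have hkey : u x₀ * (deriv u x₀ * (c + F x₀) + u x₀ * g x₀)
        - deriv u x₀ * (u x₀ * (c + F x₀)) = 1 := by
      simp only [hgdef]
      field_simp
      ring
    rw [hkey]
    exact one_ne_zero
end

section
/- Let u be a positive solution of u'' + p u = 0 and v a positive solution of v'' + P v = 0 on (a,b), with P(x) ≥ p(x). Let F(x) = ∫_{x₀}^x dt/u²(t) and let F⁻¹ denote its inverse. Then the function w = (v/u) ∘ F⁻¹ is concave on the range of F. -/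
open Set intervalIntegral

/-- Relative convexity lemma (Chuaqui–Duren–Osgood): if `u, v > 0` solve `u'' + p u = 0`
and `v'' + P v = 0` with `P ≥ p`, and `F(x) = ∫_{x₀}^x dt/u²` with inverse `G`, then
`(v/u) ∘ F⁻¹` is concave on the range of `F`. -/
theorem relative_convexity (a b x₀ : ℝ) (hx₀ : x₀ ∈ Ioo a b)
    (p P u v : ℝ → ℝ)
    (hp : ContinuousOn p (Ioo a b)) (hP : ContinuousOn P (Ioo a b))
    (hPp : ∀ x ∈ Ioo a b, p x ≤ P x)
    (hu : ∀ x ∈ Ioo a b, HasDerivAt u (deriv u x) x ∧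
      HasDerivAt (deriv u) (-(p x * u x)) x)
    (hv : ∀ x ∈ Ioo a b, HasDerivAt v (deriv v x) x ∧
      HasDerivAt (deriv v) (-(P x * v x)) x)
    (hupos : ∀ x ∈ Ioo a b, 0 < u x) (hvpos : ∀ x ∈ Ioo a b, 0 < v x)
    (F G : ℝ → ℝ)
    (hF : ∀ x, F x = ∫ t in x₀..x, 1 / (u t) ^ 2)
    (hG : ∀ x ∈ Ioo a b, G (F x) = x) :
    ConcaveOn ℝ (F '' Ioo a b) (fun y => v (G y) / u (G y)) := by
  set s : Set ℝ := Ioo a b with hsdef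
  have hsopen : IsOpen s := isOpen_Ioo
  have hsconv : Convex ℝ s := convex_Ioo a b
  have hsord : s.OrdConnected := hsconv.ordConnected
  -- continuity of everything on s
  have hucont : ContinuousOn u s := fun x hx => ((hu x hx).1.continuousAt).continuousWithinAt
  have hvcont : ContinuousOn v s := fun x hx => ((hv x hx).1.continuousAt).continuousWithinAt
  have hune : ∀ x ∈ s, u x ≠ 0 := fun x hx => ne_of_gt (hupos x hx)
  -- the integrand
  set g : ℝ → ℝ := fun t => 1 / (u t) ^ 2 with hgdef
  have hgcont : ContinuousOn g s := by
    intro x hx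
    exact (continuousWithinAt_const.div ((hucont x hx).pow 2)
      (pow_ne_zero 2 (hune x hx)))
  have hgpos : ∀ x ∈ s, 0 < g x := fun x hx => by
    have := hupos x hx; positivity
  -- derivative of F
  have hF' : ∀ x ∈ s, HasDerivAt F (g x) x := by
    intro x hx
    have hsub : uIcc x₀ x ⊆ s := hsord.uIcc_subset hx₀ hx
    have hint : IntervalIntegrable g MeasureTheory.volume x₀ x :=
      (hgcont.mono hsub).intervalIntegrable
    have hmeas : StronglyMeasurableAtFilter g (nhds x) :=
      hgcont.stronglyMeasurableAtFilter hsopen x hx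
    have hca : ContinuousAt g x := (hgcont x hx).continuousAt (hsopen.mem_nhds hx)
    have hFe : F = fun y => ∫ t in x₀..y, g t := funext hF
    rw [hFe]
    exact intervalIntegral.integral_hasDerivAt_right hint hmeas hca
  have hFcont : ContinuousOn F s := fun x hx =>
    ((hF' x hx).continuousAt).continuousWithinAt
  have hFdiff : DifferentiableOn ℝ F s := fun x hx =>
    ((hF' x hx).differentiableAt).differentiableWithinAt
  have hFmono : StrictMonoOn F s := by
    refine strictMonoOn_of_deriv_pos hsconv hFcont ?_
    intro x hx
    rw [hsopen.interior_eq] at hx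
    rw [(hF' x hx).deriv]
    exact hgpos x hx
  -- the Wronskian-type function h = v' u - u' v
  set W : ℝ → ℝ := fun x => deriv v x * u x - deriv u x * v x with hWdef
  have hW' : ∀ x ∈ s, HasDerivAt W ((p x - P x) * (u x * v x)) x := by
    intro x hx
    have h1 : HasDerivAt (fun y => deriv v y * u y)
        (-(P x * v x) * u x + deriv v x * deriv u x) x := (hv x hx).2.mul (hu x hx).1
    have h2 : HasDerivAt (fun y => deriv u y * v y)
        (-(p x * u x) * v x + deriv u x * deriv v x) x := (hu x hx).2.mul (hv x hx).1
    have : HasDerivAt W (-(P x * v x) * u x + deriv v x * deriv u x - (-(p x * u x) * v x + deriv u x * deriv v x)) x := h1.sub h2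
    convert this using 1
    ring
  have hWcont : ContinuousOn W s := fun x hx =>
    ((hW' x hx).continuousAt).continuousWithinAt
  have hWanti : AntitoneOn W s := by
    refine antitoneOn_of_deriv_nonpos hsconv hWcont ?_ ?_
    · intro x hx
      rw [hsopen.interior_eq] at hx
      exact ((hW' x hx).differentiableAt).differentiableWithinAt
    · intro x hx
      rw [hsopen.interior_eq] at hx
      rw [(hW' x hx).deriv]
      have h1 : p x - P x ≤ 0 := sub_nonpos.mpr (hPp x hx)
      have h2 : 0 < u x * v x := mul_pos (hupos x hx) (hvpos x hx)
      exact mul_nonpos_of_nonpos_of_nonneg h1 h2.le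
  -- the ratio r = v / u
  set r : ℝ → ℝ := fun x => v x / u x with hrdef
  have hr' : ∀ x ∈ s, HasDerivAt r (W x * g x) x := by
    intro x hx
    have : HasDerivAt r ((deriv v x * u x - v x * deriv u x) / u x ^ 2) x := ((hv x hx).1.div (hu x hx).1 (hune x hx))
    convert this using 1
    field_simp [hWdef, hgdef]
    ring
  have hrcont : ContinuousOn r s := fun x hx =>
    ((hr' x hx).continuousAt).continuousWithinAt
  -- key: slopes of (r, F) are given by W at an intermediate point
  have key : ∀ x ∈ s, ∀ y ∈ s, x < y →
      ∃ c ∈ Ioo x y, (r y - r x) / (F y - F x) = W c := by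
    intro x hx y hy hxy
    have hIcc : Icc x y ⊆ s := hsord.out hx hy
    have hIoo : Ioo x y ⊆ s := fun z hz => hIcc (Ioo_subset_Icc_self hz)
    obtain ⟨c, hc, hceq⟩ := exists_ratio_hasDerivAt_eq_ratio_slope r
      (fun z => W z * g z) hxy (hrcont.mono hIcc)
      (fun z hz => hr' z (hIoo hz)) F g (hFcont.mono hIcc)
      (fun z hz => hF' z (hIoo hz))
    refine ⟨c, hc, ?_⟩
    have hcs : c ∈ s := hIoo hc
    have hgc : g c ≠ 0 := ne_of_gt (hgpos c hcs)
    have hFlt : F x < F y := hFmono hx hy hxy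
    have hFne : F y - F x ≠ 0 := sub_ne_zero.mpr (ne_of_gt hFlt)
    have h2 : (F y - F x) * W c * g c = (r y - r x) * g c := by
      rw [mul_assoc]; exact hceq
    have h3 := mul_right_cancel₀ hgc h2
    field_simp
    rw [← h3, mul_comm]
  -- image set is convex
  have htconv : Convex ℝ (F '' s) := by
    rw [convex_iff_ordConnected]
    constructor
    rintro _ ⟨x₁, hx₁, rfl⟩ _ ⟨x₂, hx₂, rfl⟩ y hy
    rcases le_total x₁ x₂ with hc | hc
    · have hIcc : Icc x₁ x₂ ⊆ s := hsord.out hx₁ hx₂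
      have := intermediate_value_Icc hc (hFcont.mono hIcc) hy
      exact image_mono hIcc this
    · have hIcc : Icc x₂ x₁ ⊆ s := hsord.out hx₂ hx₁
      have := intermediate_value_Icc' hc (hFcont.mono hIcc) hy
      exact image_mono hIcc this
  -- conclude
  refine concaveOn_of_slope_anti_adjacent htconv ?_
  intro y₁ y₂ y₃ hy₁ hy₃ h12 h23
  have hy₂ : y₂ ∈ F '' s := htconv.ordConnected.out hy₁ hy₃ ⟨h12.le, h23.le⟩
  obtain ⟨x₁, hx₁, rfl⟩ := hy₁
  obtain ⟨x₃, hx₃, rfl⟩ := hy₃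
  obtain ⟨x₂, hx₂, rfl⟩ := hy₂
  have h12' : x₁ < x₂ := (hFmono.lt_iff_lt hx₁ hx₂).mp h12
  have h23' : x₂ < x₃ := (hFmono.lt_iff_lt hx₂ hx₃).mp h23
  have e1 : v (G (F x₁)) / u (G (F x₁)) = r x₁ := by rw [hG x₁ hx₁]
  have e2 : v (G (F x₂)) / u (G (F x₂)) = r x₂ := by rw [hG x₂ hx₂]
  have e3 : v (G (F x₃)) / u (G (F x₃)) = r x₃ := by rw [hG x₃ hx₃]
  simp only [e1, e2, e3]
  obtain ⟨c₂, hc₂, heq₂⟩ := key x₂ hx₂ x₃ hx₃ h23'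
  obtain ⟨c₁, hc₁, heq₁⟩ := key x₁ hx₁ x₂ hx₂ h12'
  rw [heq₁, heq₂]
  exact hWanti (hsord.out hx₁ hx₂ (Ioo_subset_Icc_self hc₁))
    (hsord.out hx₂ hx₃ (Ioo_subset_Icc_self hc₂)) (hc₁.2.le.trans hc₂.1.le)
end
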